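/- arXiv:2203.15910 — 8 statements merged into one kernel-verified Lean document; each statement's English description precedes it below -/
import Mathlib

section
/- Let ℓ ≥ 1 and let Q be a quadratic form on an ℓ-dimensional 𝔽₂-vector space with Q not identically zero. Then Q is isometric to one of the following: H₊^{⊕m₁} ⊕ 0^{⊕m₂} with m₁ ≥ 1 and 2m₁ + m₂ = ℓ; H₋ ⊕ H₊^{⊕(m₁−1)} ⊕ 0^{⊕m₂} with m₁ ≥ 1 and 2m₁ + m₂ = ℓ; or H₊^{⊕m₁} ⊕ Q₁ ⊕ 0^{⊕(m₂−1)} with m₁ ≥ 0, m₂ ≥ 1 and 2m₁ + m₂ = ℓ. -/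
/-- The polar form `B_Q(u,v) = Q(u+v) − Q(u) − Q(v)` of a map `Q : V → 𝔽₂`. -/
def polarF {V : Type*} [Add V] (Q : V → ZMod 2) (u v : V) : ZMod 2 :=
  Q (u + v) - Q u - Q v

/-- `Q : V → 𝔽₂` is a quadratic form: `Q (a • v) = a² Q v` and the polar form is bilinear
(by symmetry of `polarF`, additivity and homogeneity in the first variable suffice, but we
record both variables). -/
def IsQuadraticForm {V : Type*} [AddCommGroup V] [Module (ZMod 2) V]
    (Q : V → ZMod 2) : Prop :=
  (∀ (a : ZMod 2) (v : V), Q (a • v) = a * a * Q v) ∧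
  (∀ u v w : V, polarF Q (u + v) w = polarF Q u w + polarF Q v w) ∧
  (∀ (a : ZMod 2) (u v : V), polarF Q (a • u) v = a * polarF Q u v) ∧
  (∀ u v w : V, polarF Q u (v + w) = polarF Q u v + polarF Q u w) ∧
  (∀ (a : ZMod 2) (u v : V), polarF Q u (a • v) = a * polarF Q u v)

/-- Two 𝔽₂-valued forms are isometric if one is obtained from the other by composition with a
linear isomorphism. -/
def IsometricForms {V W : Type*} [AddCommGroup V] [Module (ZMod 2) V]
    [AddCommGroup W] [Module (ZMod 2) W] (Q : V → ZMod 2) (Q' : W → ZMod 2) : Prop :=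
  ∃ f : V ≃ₗ[ZMod 2] W, ∀ v, Q v = Q' (f v)

/-- `H₊(x,y) = xy`. -/
def Hplus : ZMod 2 × ZMod 2 → ZMod 2 := fun p => p.1 * p.2

/-- `H₋(x,y) = x² + y² + xy`. -/
def Hminus : ZMod 2 × ZMod 2 → ZMod 2 := fun p => p.1 ^ 2 + p.2 ^ 2 + p.1 * p.2

/-- `Q₁(x) = x²`. -/
def Qone : ZMod 2 → ZMod 2 := fun x => x ^ 2

set_option linter.unusedSectionVars false

-- basics
namespace Cls

lemma z2cases (a : ZMod 2) : a = 0 ∨ a = 1 := by revert a; decide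
lemma z2sq (a : ZMod 2) : a * a = a := by revert a; decide
lemma z2ne (a : ZMod 2) (h : a ≠ 0) : a = 1 := by revert a; decide

variable {V : Type*} [AddCommGroup V] [Module (ZMod 2) V]

lemma add_self_eq_zero (v : V) : v + v = 0 := by
  have h : v + v = ((2 : ZMod 2)) • v := by rw [two_smul]
  rw [h, show (2 : ZMod 2) = 0 by decide, zero_smul]

lemma map_zero' {Q : V → ZMod 2} (hQ : IsQuadraticForm Q) : Q 0 = 0 := by
  have := hQ.1 0 0
  simpa using this

lemma map_smul' {Q : V → ZMod 2} (hQ : IsQuadraticForm Q) (a : ZMod 2) (v : V) :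
    Q (a • v) = a * Q v := by
  rw [hQ.1, z2sq]

lemma polar_expand (Q : V → ZMod 2) (u v : V) :
    Q (u + v) = Q u + Q v + polarF Q u v := by
  unfold polarF; ring

lemma polar_comm (Q : V → ZMod 2) (u v : V) : polarF Q u v = polarF Q v u := by
  unfold polarF; rw [add_comm u v]; ring

lemma polar_self {Q : V → ZMod 2} (hQ : IsQuadraticForm Q) (v : V) : polarF Q v v = 0 := by
  have h : Q (v + v) = 0 := by rw [add_self_eq_zero, map_zero' hQ]
  unfold polarF
  rw [h]
  have : ∀ a : ZMod 2, (0:ZMod 2) - a - a = 0 := by decide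
  exact this _

-- form combinators
def prodForm {A B : Type*} (Q : A → ZMod 2) (R : B → ZMod 2) : A × B → ZMod 2 :=
  fun p => Q p.1 + R p.2

def twoF (ε : ZMod 2) : ZMod 2 × ZMod 2 → ZMod 2 :=
  fun p => p.1 * p.2 + ε * (p.1 + p.2)

def piTwist {k : ℕ} (s : Fin k → ZMod 2) : (Fin k → ZMod 2 × ZMod 2) → ZMod 2 :=
  fun p => ∑ i, twoF (s i) (p i)

section iso
variable {A B C D E F : Type*}
  [AddCommGroup A] [Module (ZMod 2) A] [AddCommGroup B] [Module (ZMod 2) B]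
  [AddCommGroup C] [Module (ZMod 2) C] [AddCommGroup D] [Module (ZMod 2) D]
  [AddCommGroup E] [Module (ZMod 2) E] [AddCommGroup F] [Module (ZMod 2) F]

lemma iso_refl (Q : A → ZMod 2) : IsometricForms Q Q :=
  ⟨LinearEquiv.refl _ _, fun _ => rfl⟩

lemma iso_symm {Q : A → ZMod 2} {R : B → ZMod 2} (h : IsometricForms Q R) :
    IsometricForms R Q := by
  obtain ⟨f, hf⟩ := h
  exact ⟨f.symm, fun v => by rw [hf (f.symm v), f.apply_symm_apply]⟩

lemma iso_trans {Q : A → ZMod 2} {R : B → ZMod 2} {S : C → ZMod 2}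
    (h : IsometricForms Q R) (h' : IsometricForms R S) : IsometricForms Q S := by
  obtain ⟨f, hf⟩ := h; obtain ⟨g, hg⟩ := h'
  exact ⟨f.trans g, fun v => by rw [hf, hg]; rfl⟩

lemma iso_prod {Q : A → ZMod 2} {R : B → ZMod 2} {Q' : C → ZMod 2} {R' : D → ZMod 2}
    (h : IsometricForms Q Q') (h' : IsometricForms R R') :
    IsometricForms (prodForm Q R) (prodForm Q' R') := by
  obtain ⟨f, hf⟩ := h; obtain ⟨g, hg⟩ := h'
  exact ⟨f.prodCongr g, fun v => by simp [prodForm, LinearEquiv.prodCongr_apply, hf, hg]⟩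

lemma iso_comm (Q : A → ZMod 2) (R : B → ZMod 2) :
    IsometricForms (prodForm Q R) (prodForm R Q) :=
  ⟨LinearEquiv.prodComm _ _ _, fun v => by simp [prodForm, add_comm]⟩

lemma iso_assoc (Q : A → ZMod 2) (R : B → ZMod 2) (S : C → ZMod 2) :
    IsometricForms (prodForm (prodForm Q R) S) (prodForm Q (prodForm R S)) :=
  ⟨LinearEquiv.prodAssoc _ _ _ _, fun v => by simp [prodForm, add_assoc]⟩

lemma iso_swap (Q : A → ZMod 2) (R : B → ZMod 2) (S : C → ZMod 2) :
    IsometricForms (prodForm Q (prodForm R S)) (prodForm R (prodForm Q S)) := by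
  refine iso_trans (iso_symm (iso_assoc Q R S)) ?_
  refine iso_trans (iso_prod (iso_comm Q R) (iso_refl S)) (iso_assoc R Q S)

end iso

end Cls

namespace Cls

-- cons linear equivalence
def consLE (k : ℕ) (M : Type*) [AddCommGroup M] [Module (ZMod 2) M] :
    (M × (Fin k → M)) ≃ₗ[ZMod 2] (Fin (k + 1) → M) where
  toFun p := Fin.cons p.1 p.2
  invFun q := (q 0, Fin.tail q)
  map_add' a b := by
    funext i
    refine Fin.cases ?_ (fun j => ?_) i <;> simp
  map_smul' c a := by
    funext i
    refine Fin.cases ?_ (fun j => ?_) i <;> simp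
  left_inv p := by simp
  right_inv q := by simp

lemma piTwist_cons {k : ℕ} (a : ZMod 2) (s : Fin k → ZMod 2)
    (x : ZMod 2 × ZMod 2) (p : Fin k → ZMod 2 × ZMod 2) :
    piTwist (Fin.cons a s) (Fin.cons x p) = twoF a x + piTwist s p := by
  unfold piTwist
  rw [Fin.sum_univ_succ]
  simp

lemma iso_cons {k : ℕ} (a : ZMod 2) (s : Fin k → ZMod 2) {Z : Type*}
    [AddCommGroup Z] [Module (ZMod 2) Z] (R : Z → ZMod 2) :
    IsometricForms (prodForm (twoF a) (prodForm (piTwist s) R))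
      (prodForm (piTwist (Fin.cons a s)) R) := by
  refine ⟨(LinearEquiv.prodAssoc (ZMod 2) (ZMod 2 × ZMod 2) (Fin k → ZMod 2 × ZMod 2) Z).symm.trans
    ((consLE k (ZMod 2 × ZMod 2)).prodCongr (LinearEquiv.refl (ZMod 2) Z)), fun v => ?_⟩
  obtain ⟨x, p, z⟩ := v
  simp [prodForm, LinearEquiv.prodAssoc, consLE, piTwist_cons, add_assoc]

-- the two exceptional small isometries
def arfLE : ((ZMod 2 × ZMod 2) × (ZMod 2 × ZMod 2)) ≃ₗ[ZMod 2]
    ((ZMod 2 × ZMod 2) × (ZMod 2 × ZMod 2)) where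
  toFun v := ((v.1.2 + v.2.2, v.1.2 + v.2.1), (v.1.1 + v.2.1 + v.2.2, v.1.1 + v.1.2 + v.2.1 + v.2.2))
  invFun v := ((v.1.1 + v.1.2 + v.2.1, v.2.1 + v.2.2), (v.1.2 + v.2.1 + v.2.2, v.1.1 + v.2.1 + v.2.2))
  map_add' a b := by revert a b; decide
  map_smul' c a := by revert c a; decide
  left_inv a := by revert a; decide
  right_inv a := by revert a; decide

lemma iso_arf : IsometricForms (prodForm (twoF 1) (twoF 1)) (prodForm (twoF 0) (twoF 0)) :=
  ⟨arfLE, by decide⟩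

lemma iso_pair (a b : ZMod 2) :
    IsometricForms (prodForm (twoF a) (twoF b)) (prodForm (twoF (a + b)) (twoF 0)) := by
  rcases z2cases a with ha | ha <;> rcases z2cases b with hb | hb <;> subst ha hb
  · exact iso_refl _
  · rw [show (0:ZMod 2) + 1 = 1 by decide]; exact iso_comm _ _
  · rw [show (1:ZMod 2) + 0 = 1 by decide]; exact iso_refl _
  · rw [show (1:ZMod 2) + 1 = 0 by decide]; exact iso_arf

def qoneLE : ((ZMod 2 × ZMod 2) × ZMod 2) ≃ₗ[ZMod 2] ((ZMod 2 × ZMod 2) × ZMod 2) where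
  toFun v := (v.1, v.1.1 + v.1.2 + v.2)
  invFun v := (v.1, v.1.1 + v.1.2 + v.2)
  map_add' a b := by revert a b; decide
  map_smul' c a := by revert c a; decide
  left_inv a := by revert a; decide
  right_inv a := by revert a; decide

lemma iso_qone : IsometricForms (prodForm (twoF 1) (fun z : ZMod 2 => z))
    (prodForm (twoF 0) (fun z : ZMod 2 => z)) :=
  ⟨qoneLE, by decide⟩

end Cls

namespace Cls
universe u

lemma iso_pairX (a b : ZMod 2) {Z : Type u} [AddCommGroup Z] [Module (ZMod 2) Z]
    (X : Z → ZMod 2) :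
    IsometricForms (prodForm (twoF a) (prodForm (twoF b) X))
      (prodForm (twoF (a + b)) (prodForm (twoF 0) X)) := by
  refine iso_trans (iso_symm (iso_assoc _ _ _)) ?_
  exact iso_trans (iso_prod (iso_pair a b) (iso_refl X)) (iso_assoc _ _ _)

lemma cons_zero_eq (k : ℕ) :
    (Fin.cons 0 (fun _ : Fin k => (0 : ZMod 2))) = fun _ : Fin (k+1) => (0 : ZMod 2) := by
  funext i
  refine Fin.cases ?_ (fun j => ?_) i <;> simp

lemma iso_norm (k : ℕ) : ∀ (s : Fin k → ZMod 2) (a : ZMod 2) (Z : Type u)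
    [AddCommGroup Z] [Module (ZMod 2) Z] (R : Z → ZMod 2),
    IsometricForms (prodForm (twoF a) (prodForm (piTwist s) R))
      (prodForm (twoF (a + ∑ i, s i)) (prodForm (piTwist (fun _ : Fin k => (0:ZMod 2))) R)) := by
  induction k with
  | zero =>
    intro s a Z _ _ R
    have hs : s = fun _ : Fin 0 => (0 : ZMod 2) := funext fun i => i.elim0
    rw [hs]
    simp only [Finset.univ_eq_empty, Finset.sum_empty, add_zero]
    exact iso_refl _
  | succ k IH =>
    intro s a Z _ _ R
    have hs : s = Fin.cons (s 0) (Fin.tail s) := (Fin.cons_self_tail s).symm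
    rw [hs]
    refine iso_trans (iso_prod (iso_refl _) (iso_symm (iso_cons (s 0) (Fin.tail s) R))) ?_
    refine iso_trans (iso_pairX a (s 0) _) ?_
    refine iso_trans (iso_prod (iso_refl _) (iso_swap _ _ _)) ?_
    refine iso_trans (IH (Fin.tail s) (a + s 0) _ (prodForm (twoF 0) R)) ?_
    refine iso_trans (iso_prod (iso_refl _) (iso_swap _ _ _)) ?_
    refine iso_trans (iso_prod (iso_refl _) (iso_cons 0 _ R)) ?_
    rw [cons_zero_eq, Fin.sum_univ_succ, ← add_assoc]
    exact iso_refl _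

end Cls

namespace Cls

variable {V : Type*} [AddCommGroup V] [Module (ZMod 2) V]

/-- The polar form in the second slot as a linear map. -/
def polarL {Q : V → ZMod 2} (hQ : IsQuadraticForm Q) (u : V) : V →ₗ[ZMod 2] ZMod 2 where
  toFun x := polarF Q u x
  map_add' x y := hQ.2.2.2.1 u x y
  map_smul' a x := hQ.2.2.2.2 a u x

@[simp] lemma polarL_apply {Q : V → ZMod 2} (hQ : IsQuadraticForm Q) (u x : V) :
    polarL hQ u x = polarF Q u x := rfl

lemma restrict_quadratic {Q : V → ZMod 2} (hQ : IsQuadraticForm Q) (W : Submodule (ZMod 2) V) :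
    IsQuadraticForm (fun w : W => Q w) := by
  have hpol : ∀ u v : W, polarF (fun w : W => Q w) u v = polarF Q u v := by
    intro u v; simp [polarF]
  refine ⟨fun a v => ?_, fun u v w => ?_, fun a u v => ?_, fun u v w => ?_, fun a u v => ?_⟩
  · simpa using hQ.1 a (v : V)
  · simp only [hpol, Submodule.coe_add]; exact hQ.2.1 u v w
  · simp only [hpol, Submodule.coe_smul]; exact hQ.2.2.1 a u v
  · simp only [hpol, Submodule.coe_add]; exact hQ.2.2.2.1 u v w
  · simp only [hpol, Submodule.coe_smul]; exact hQ.2.2.2.2 a u v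

lemma split_plane [FiniteDimensional (ZMod 2) V] {Q : V → ZMod 2} (hQ : IsQuadraticForm Q)
    {u v : V} {ε : ZMod 2} (huv : polarF Q u v = 1) (hu : Q u = ε) (hv : Q v = ε) :
    ∃ W : Submodule (ZMod 2) V,
      Module.finrank (ZMod 2) V = 2 + Module.finrank (ZMod 2) W ∧
      IsometricForms Q (prodForm (twoF ε) (fun w : W => Q w)) := by
  classical
  set Bu := polarL hQ u with hBu
  set Bv := polarL hQ v with hBv
  have hvu : polarF Q v u = 1 := by rw [polar_comm]; exact huv
  set W : Submodule (ZMod 2) V := LinearMap.ker Bu ⊓ LinearMap.ker Bv with hW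
  have memW : ∀ x : V, x - Bv x • u - Bu x • v ∈ W := by
    intro x
    constructor
    · show Bu _ = 0
      rw [map_sub, map_sub, map_smul, map_smul]
      simp only [polarL_apply, smul_eq_mul, Bu, Bv]
      rw [polar_self hQ u, huv]
      ring
    · show Bv _ = 0
      rw [map_sub, map_sub, map_smul, map_smul]
      simp only [polarL_apply, smul_eq_mul, Bu, Bv]
      rw [polar_self hQ v, hvu]
      ring
  have hWu : ∀ w : V, w ∈ W → polarF Q u w = 0 := fun w hw => hw.1
  have hWv : ∀ w : V, w ∈ W → polarF Q v w = 0 := fun w hw => hw.2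
  let e : V ≃ₗ[ZMod 2] (ZMod 2 × ZMod 2) × W :=
    { toFun := fun x => ((Bv x, Bu x), ⟨x - Bv x • u - Bu x • v, memW x⟩)
      map_add' := by
        intro x y
        refine Prod.ext (Prod.ext ?_ ?_) (Subtype.ext ?_)
        · simp
        · simp
        · simp only [Prod.snd_add, Submodule.coe_add]
          rw [map_add Bv, map_add Bu]
          module
      map_smul' := by
        intro a x
        refine Prod.ext (Prod.ext ?_ ?_) (Subtype.ext ?_)
        · simp
        · simp
        · simp only [Prod.smul_snd, SetLike.val_smul, RingHom.id_apply]
          rw [map_smul Bv, map_smul Bu]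
          simp only [smul_eq_mul]
          rw [mul_comm a (Bv x), mul_comm a (Bu x), mul_smul, mul_smul]
          module
      invFun := fun p => p.1.1 • u + p.1.2 • v + (p.2 : V)
      left_inv := by
        intro x
        simp only
        module
      right_inv := by
        rintro ⟨⟨a, b⟩, ⟨w, hw⟩⟩
        have h1 : Bv (a • u + b • v + w) = a := by
          rw [map_add, map_add, map_smul, map_smul]
          simp only [polarL_apply, smul_eq_mul, Bv, Bu]
          rw [polar_self hQ v, hvu, hWv w hw]
          ring
        have h2 : Bu (a • u + b • v + w) = b := by
          rw [map_add, map_add, map_smul, map_smul]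
          simp only [polarL_apply, smul_eq_mul, Bv, Bu]
          rw [polar_self hQ u, huv, hWu w hw]
          ring
        refine Prod.ext (Prod.ext ?_ ?_) (Subtype.ext ?_)
        · exact h1
        · exact h2
        · simp only [h1, h2]
          module }
  refine ⟨W, ?_, ⟨e, ?_⟩⟩
  · rw [e.finrank_eq, Module.finrank_prod, Module.finrank_prod, Module.finrank_self]
  · intro x
    set a := Bv x with ha
    set b := Bu x with hb
    set r := x - a • u - b • v with hr
    have hx : x = (a • u + b • v) + r := by rw [hr]; module
    have hrW : r ∈ W := memW x
    have e1 : Q x = Q (a • u + b • v) + Q r + polarF Q (a • u + b • v) r := by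
      conv_lhs => rw [hx]
      rw [polar_expand Q (a • u + b • v) r]
    have e2 : polarF Q (a • u + b • v) r = 0 := by
      rw [hQ.2.1, hQ.2.2.1, hQ.2.2.1, hWu r hrW, hWv r hrW]
      ring
    have e3 : Q (a • u + b • v) = a * b + ε * (a + b) := by
      rw [polar_expand Q (a • u) (b • v), map_smul' hQ a u, map_smul' hQ b v,
        hQ.2.2.1, hQ.2.2.2.2, huv, hu, hv]
      ring
    show Q x = prodForm (twoF ε) (fun w : W => Q w) (e x)
    simp only [prodForm, twoF, e, LinearEquiv.coe_mk]
    rw [e1, e2, e3]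
    show _ = a * b + ε * (a + b) + Q r
    ring

lemma normalize_plane {Q : V → ZMod 2} (hQ : IsQuadraticForm Q)
    {u v : V} (huv : polarF Q u v = 1) :
    ∃ (u' v' : V) (ε : ZMod 2), polarF Q u' v' = 1 ∧ Q u' = ε ∧ Q v' = ε := by
  by_cases h : Q u = Q v
  · exact ⟨u, v, Q v, by rw [huv], h, rfl⟩
  · rcases z2cases (Q u) with hu | hu <;> rcases z2cases (Q v) with hv | hv
    · exact absurd (hu.trans hv.symm) h
    · -- Q u = 0, Q v = 1 : use (u+v, u)
      refine ⟨u + v, u, 0, ?_, ?_, hu⟩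
      · rw [polar_comm Q (u + v) u, hQ.2.2.2.1 u u v, polar_self hQ u, huv]; ring
      · rw [polar_expand Q u v, hu, hv, huv]; decide
    · -- Q u = 1, Q v = 0 : use (v, u+v)
      refine ⟨v, u + v, 0, ?_, hv, ?_⟩
      · rw [hQ.2.2.2.1 v u v, polar_self hQ v, polar_comm Q v u, huv]; ring
      · rw [polar_expand Q u v, hu, hv, huv]; decide
    · exact absurd (hu.trans hv.symm) h

lemma linear_case [FiniteDimensional (ZMod 2) V] {Q : V → ZMod 2} (hQ : IsQuadraticForm Q)
    (hB : ∀ x y : V, polarF Q x y = 0) {v : V} (hv : Q v = 1) :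
    ∃ W : Submodule (ZMod 2) V,
      Module.finrank (ZMod 2) V = 1 + Module.finrank (ZMod 2) W ∧
      IsometricForms Q
        (prodForm (fun a : ZMod 2 => a) (fun _ : W => (0 : ZMod 2))) := by
  classical
  have hadd : ∀ x y : V, Q (x + y) = Q x + Q y := by
    intro x y
    rw [polar_expand Q x y, hB]; ring
  let Qlin : V →ₗ[ZMod 2] ZMod 2 :=
    { toFun := Q, map_add' := hadd, map_smul' := fun a x => by simp [map_smul' hQ] }
  set W := LinearMap.ker Qlin with hW
  have memW : ∀ x : V, x - Q x • v ∈ W := by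
    intro x
    show Qlin (x - Q x • v) = 0
    rw [map_sub, map_smul]
    show Q x - Q x * Q v = 0
    rw [hv]; ring
  let e : V ≃ₗ[ZMod 2] ZMod 2 × W :=
    { toFun := fun x => (Q x, ⟨x - Q x • v, memW x⟩)
      map_add' := by
        intro x y
        refine Prod.ext (hadd x y) (Subtype.ext ?_)
        simp only [Prod.snd_add, Submodule.coe_add]
        rw [hadd]
        module
      map_smul' := by
        intro a x
        refine Prod.ext (map_smul' hQ a x) (Subtype.ext ?_)
        simp only [Prod.smul_snd, SetLike.val_smul, RingHom.id_apply, smul_eq_mul]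
        rw [map_smul' hQ a x]
        module
      invFun := fun p => p.1 • v + (p.2 : V)
      left_inv := by
        intro x
        simp only
        module
      right_inv := by
        rintro ⟨a, ⟨w, hw⟩⟩
        have hQw : Q w = 0 := hw
        have h1 : Q (a • v + w) = a := by
          rw [hadd, map_smul' hQ a v, hv, hQw]; ring
        refine Prod.ext h1 (Subtype.ext ?_)
        simp only [h1]
        module }
  refine ⟨W, ?_, ⟨e, ?_⟩⟩
  · rw [e.finrank_eq, Module.finrank_prod, Module.finrank_self]
  · intro x
    show Q x = Q x + 0
    ring

end Cls

namespace Cls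
universe u

def emptyBlockLE (Z : Type u) [AddCommGroup Z] [Module (ZMod 2) Z] :
    Z ≃ₗ[ZMod 2] (Fin 0 → ZMod 2 × ZMod 2) × Z where
  toFun z := (fun i => i.elim0, z)
  invFun p := p.2
  map_add' a b := Prod.ext (funext fun i => i.elim0) rfl
  map_smul' a b := Prod.ext (funext fun i => i.elim0) rfl
  left_inv a := rfl
  right_inv p := Prod.ext (funext fun i => i.elim0) rfl

lemma iso_emptyBlock {Z : Type u} [AddCommGroup Z] [Module (ZMod 2) Z]
    (R : Z → ZMod 2) (s : Fin 0 → ZMod 2) :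
    IsometricForms R (prodForm (piTwist s) R) := by
  refine ⟨emptyBlockLE Z, fun z => ?_⟩
  simp [prodForm, piTwist, emptyBlockLE]

lemma iso_zero_forms {A : Type u} {B : Type*} [AddCommGroup A] [Module (ZMod 2) A]
    [AddCommGroup B] [Module (ZMod 2) B] [FiniteDimensional (ZMod 2) A]
    [FiniteDimensional (ZMod 2) B]
    (h : Module.finrank (ZMod 2) A = Module.finrank (ZMod 2) B) :
    IsometricForms (fun _ : A => (0 : ZMod 2)) (fun _ : B => (0 : ZMod 2)) := by
  obtain ⟨e⟩ := FiniteDimensional.nonempty_linearEquiv_of_finrank_eq h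
  exact ⟨e, fun _ => rfl⟩

lemma main_classify : ∀ (n : ℕ) (V : Type u) [AddCommGroup V] [Module (ZMod 2) V]
    [FiniteDimensional (ZMod 2) V] (Q : V → ZMod 2), IsQuadraticForm Q →
    Module.finrank (ZMod 2) V = n →
    ∃ (k m : ℕ) (s : Fin k → ZMod 2),
      (2 * k + m = n ∧
        IsometricForms Q (prodForm (piTwist s) (fun _ : Fin m → ZMod 2 => (0 : ZMod 2)))) ∨
      (2 * k + (m + 1) = n ∧
        IsometricForms Q
          (prodForm (piTwist s) (fun q : ZMod 2 × (Fin m → ZMod 2) => q.1))) := by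
  intro n
  induction n using Nat.strong_induction_on with
  | _ n IH =>
    intro V _ _ _ Q hQ hrk
    by_cases hB : ∀ x y : V, polarF Q x y = 0
    · by_cases hQ0 : ∀ x, Q x = 0
      · -- zero form
        refine ⟨0, n, fun i => i.elim0, Or.inl ⟨by omega, ?_⟩⟩
        have h1 : IsometricForms Q (fun _ : Fin n → ZMod 2 => (0 : ZMod 2)) := by
          obtain ⟨e⟩ := FiniteDimensional.nonempty_linearEquiv_of_finrank_eq
            (by rw [hrk]; simp : Module.finrank (ZMod 2) V =
              Module.finrank (ZMod 2) (Fin n → ZMod 2))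
          exact ⟨e, fun v => hQ0 v⟩
        exact iso_trans h1 (iso_emptyBlock _ _)
      · -- nonzero linear form
        push_neg at hQ0
        obtain ⟨v, hv⟩ := hQ0
        have hv1 : Q v = 1 := z2ne _ hv
        obtain ⟨W, hrkW, hiso⟩ := linear_case hQ hB hv1
        set m := Module.finrank (ZMod 2) W with hm
        refine ⟨0, m, fun i => i.elim0, Or.inr ⟨by omega, ?_⟩⟩
        have h2 : IsometricForms Q
            (prodForm (fun a : ZMod 2 => a) (fun _ : Fin m → ZMod 2 => (0 : ZMod 2))) := by
          refine iso_trans hiso (iso_prod (iso_refl _) (iso_zero_forms ?_))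
          simp [hm]
        have h3 : (prodForm (fun a : ZMod 2 => a) (fun _ : Fin m → ZMod 2 => (0 : ZMod 2)))
            = fun q : ZMod 2 × (Fin m → ZMod 2) => q.1 := funext fun q => add_zero _
        rw [h3] at h2
        exact iso_trans h2 (iso_emptyBlock _ _)
    · -- there is a hyperbolic pair
      push_neg at hB
      obtain ⟨x, y, hxy⟩ := hB
      have hxy1 : polarF Q x y = 1 := z2ne _ hxy
      obtain ⟨u', v', ε, huv, hu, hv⟩ := normalize_plane hQ hxy1
      obtain ⟨W, hrkW, hiso⟩ := split_plane hQ huv hu hv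
      have hQW : IsQuadraticForm (fun w : W => Q w) := restrict_quadratic hQ W
      set d := Module.finrank (ZMod 2) W with hd
      have hdn : d < n := by omega
      obtain ⟨k, m, s, hcase⟩ := IH d hdn W (fun w : W => Q w) hQW rfl
      rcases hcase with ⟨hdim, hWiso⟩ | ⟨hdim, hWiso⟩
      · refine ⟨k + 1, m, Fin.cons ε s, Or.inl ⟨by omega, ?_⟩⟩
        refine iso_trans hiso ?_
        refine iso_trans (iso_prod (iso_refl _) hWiso) ?_
        exact iso_cons ε s _
      · refine ⟨k + 1, m, Fin.cons ε s, Or.inr ⟨by omega, ?_⟩⟩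
        refine iso_trans hiso ?_
        refine iso_trans (iso_prod (iso_refl _) hWiso) ?_
        exact iso_cons ε s _

end Cls

namespace Cls
universe u

lemma iso_split_head {k' : ℕ} (s : Fin (k' + 1) → ZMod 2) {Z : Type u}
    [AddCommGroup Z] [Module (ZMod 2) Z] (R : Z → ZMod 2) :
    IsometricForms (prodForm (piTwist s) R)
      (prodForm (twoF (∑ i, s i))
        (prodForm (piTwist (fun _ : Fin k' => (0 : ZMod 2))) R)) := by
  have hsum : (∑ i, s i) = s 0 + ∑ i, Fin.tail s i := by
    rw [Fin.sum_univ_succ]; rfl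
  rw [hsum]
  conv_lhs => rw [← Fin.cons_self_tail s]
  refine iso_trans (iso_symm (iso_cons (s 0) (Fin.tail s) R)) ?_
  exact iso_norm k' (Fin.tail s) (s 0) Z R

lemma iso_kill_twist {Z : Type u} [AddCommGroup Z] [Module (ZMod 2) Z] (R : Z → ZMod 2) :
    IsometricForms (prodForm (twoF 1) (prodForm (fun a : ZMod 2 => a) R))
      (prodForm (twoF 0) (prodForm (fun a : ZMod 2 => a) R)) := by
  refine iso_trans (iso_symm (iso_assoc _ _ _)) ?_
  exact iso_trans (iso_prod iso_qone (iso_refl R)) (iso_assoc _ _ _)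

end Cls

open Cls in
/-- Classification of nonzero quadratic forms over `𝔽₂`:  every nonzero quadratic form on an
`ℓ`-dimensional `𝔽₂`-vector space is isometric to `H₊^{⊕m₁} ⊕ 0^{⊕m₂}` (`m₁ ≥ 1`), or to
`H₋ ⊕ H₊^{⊕(m₁−1)} ⊕ 0^{⊕m₂}` (`m₁ ≥ 1`), or to `H₊^{⊕m₁} ⊕ Q₁ ⊕ 0^{⊕(m₂−1)}` (`m₂ ≥ 1`),
where `2m₁ + m₂ = ℓ`. -/
theorem statement_0 {V : Type*} [AddCommGroup V] [Module (ZMod 2) V]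
    [FiniteDimensional (ZMod 2) V] (ℓ : ℕ) (hℓ : 1 ≤ ℓ)
    (hdim : Module.finrank (ZMod 2) V = ℓ)
    (Q : V → ZMod 2) (hQ : IsQuadraticForm Q) (hQne : Q ≠ fun _ => 0) :
    (∃ m₁ m₂ : ℕ, 1 ≤ m₁ ∧ 2 * m₁ + m₂ = ℓ ∧
      IsometricForms Q
        (fun p : (Fin m₁ → ZMod 2 × ZMod 2) × (Fin m₂ → ZMod 2) =>
          ∑ i, Hplus (p.1 i))) ∨
    (∃ m₁ m₂ : ℕ, 1 ≤ m₁ ∧ 2 * m₁ + m₂ = ℓ ∧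
      IsometricForms Q
        (fun p : (ZMod 2 × ZMod 2) × (Fin (m₁ - 1) → ZMod 2 × ZMod 2) × (Fin m₂ → ZMod 2) =>
          Hminus p.1 + ∑ i, Hplus (p.2.1 i))) ∨
    (∃ m₁ m₂ : ℕ, 1 ≤ m₂ ∧ 2 * m₁ + m₂ = ℓ ∧
      IsometricForms Q
        (fun p : (Fin m₁ → ZMod 2 × ZMod 2) × ZMod 2 × (Fin (m₂ - 1) → ZMod 2) =>
          (∑ i, Hplus (p.1 i)) + Qone p.2.1)) := by
  classical
  have hz2 : ∀ z : ZMod 2, z ^ 2 = z := by decide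
  obtain ⟨k, m, s, hcase⟩ := Cls.main_classify ℓ V Q hQ hdim
  rcases hcase with ⟨hdim2, hiso⟩ | ⟨hdim2, hiso⟩
  · -- no Q₁ component
    by_cases hk : k = 0
    · subst hk
      exfalso
      apply hQne
      obtain ⟨f, hf⟩ := hiso
      funext x
      rw [hf x]
      simp [prodForm, piTwist]
    · obtain ⟨k', rfl⟩ := Nat.exists_eq_succ_of_ne_zero hk
      have hiso2 := iso_trans hiso (iso_split_head s _)
      rcases z2cases (∑ i, s i) with hσ | hσ <;> rw [hσ] at hiso2
      · -- all H₊ : case 1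
        left
        refine ⟨k' + 1, m, by omega, by omega, ?_⟩
        have h3 := iso_trans hiso2 (iso_cons 0 (fun _ : Fin k' => (0 : ZMod 2)) _)
        rw [cons_zero_eq] at h3
        have hT : (fun p : (Fin (k' + 1) → ZMod 2 × ZMod 2) × (Fin m → ZMod 2) =>
              ∑ i, Hplus (p.1 i))
            = prodForm (piTwist (fun _ : Fin (k' + 1) => (0 : ZMod 2)))
                (fun _ : Fin m → ZMod 2 => (0 : ZMod 2)) := by
          funext p
          simp [prodForm, piTwist, twoF, Hplus]
        rw [hT]
        exact h3
      · -- one H₋ : case 2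
        right; left
        refine ⟨k' + 1, m, by omega, by omega, ?_⟩
        have hT : (fun p : (ZMod 2 × ZMod 2) × (Fin k' → ZMod 2 × ZMod 2) × (Fin m → ZMod 2) =>
              Hminus p.1 + ∑ i, Hplus (p.2.1 i))
            = prodForm (twoF 1) (prodForm (piTwist (fun _ : Fin k' => (0 : ZMod 2)))
                (fun _ : Fin m → ZMod 2 => (0 : ZMod 2))) := by
          funext p
          simp [prodForm, piTwist, twoF, Hplus, Hminus, hz2]
          ring
        have final : IsometricForms Q
            (fun p : (ZMod 2 × ZMod 2) × (Fin k' → ZMod 2 × ZMod 2) × (Fin m → ZMod 2) =>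
              Hminus p.1 + ∑ i, Hplus (p.2.1 i)) := by
          rw [hT]; exact hiso2
        exact final
  · -- Q₁ component : case 3
    right; right
    refine ⟨k, m + 1, by omega, by omega, ?_⟩
    have hR : (fun q : ZMod 2 × (Fin m → ZMod 2) => q.1)
        = prodForm (fun a : ZMod 2 => a) (fun _ : Fin m → ZMod 2 => (0 : ZMod 2)) :=
      funext fun q => (add_zero _).symm
    have hT : (fun p : (Fin k → ZMod 2 × ZMod 2) × ZMod 2 × (Fin m → ZMod 2) =>
          (∑ i, Hplus (p.1 i)) + Qone p.2.1)
        = prodForm (piTwist (fun _ : Fin k => (0 : ZMod 2)))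
            (prodForm (fun a : ZMod 2 => a) (fun _ : Fin m → ZMod 2 => (0 : ZMod 2))) := by
      funext p
      simp [prodForm, piTwist, twoF, Hplus, Qone, hz2]
    have key : IsometricForms Q
        (prodForm (piTwist (fun _ : Fin k => (0 : ZMod 2)))
          (prodForm (fun a : ZMod 2 => a) (fun _ : Fin m → ZMod 2 => (0 : ZMod 2)))) := by
      by_cases hk : k = 0
      · subst hk
        have hs : s = fun _ : Fin 0 => (0 : ZMod 2) := funext fun i => i.elim0
        rw [hs, hR] at hiso
        exact hiso
      · obtain ⟨k', rfl⟩ := Nat.exists_eq_succ_of_ne_zero hk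
        have hiso2 := iso_trans hiso (iso_split_head s _)
        rw [hR] at hiso2
        rcases z2cases (∑ i, s i) with hσ | hσ <;> rw [hσ] at hiso2
        · have h3 := iso_trans hiso2 (iso_cons 0 (fun _ : Fin k' => (0 : ZMod 2)) _)
          rw [cons_zero_eq] at h3
          exact h3
        · have step1 := iso_trans hiso2 (iso_prod (iso_refl (twoF 1))
            (iso_swap (piTwist (fun _ : Fin k' => (0 : ZMod 2))) (fun a : ZMod 2 => a)
              (fun _ : Fin m → ZMod 2 => (0 : ZMod 2))))
          have step2 := iso_trans step1 (iso_kill_twist _)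
          have step3 := iso_trans step2 (iso_prod (iso_refl (twoF 0))
            (iso_swap (fun a : ZMod 2 => a) (piTwist (fun _ : Fin k' => (0 : ZMod 2)))
              (fun _ : Fin m → ZMod 2 => (0 : ZMod 2))))
          have h3 := iso_trans step3 (iso_cons 0 (fun _ : Fin k' => (0 : ZMod 2)) _)
          rw [cons_zero_eq] at h3
          exact h3
    have final : IsometricForms Q
        (fun p : (Fin k → ZMod 2 × ZMod 2) × ZMod 2 × (Fin m → ZMod 2) =>
          (∑ i, Hplus (p.1 i)) + Qone p.2.1) := by
      rw [hT]; exact key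
    exact final
end

section
/- Let Q be a quadratic form on a finite-dimensional 𝔽₂-vector space V, and suppose V = V₁ ⊕ V₂ with V₁ nontrivial, Q restricted to V₂ identically zero, and Q(v₁ + v₂) = Q(v₁) for all v₁ ∈ V₁, v₂ ∈ V₂ (i.e. Q = q ⊕ 0^{⊕n} where q = Q|_{V₁} and n = dim V₂). Then Q is admissible if and only if q is admissible. -/
/-- A form `Q` on an `𝔽₂`-vector space is admissible if there is a basis `v₁,…,v_ℓ` with
`Q(vᵢ) = 1` for all `i`, and for every `i` there is `j` with `B_Q(vᵢ,vⱼ) = 1`. -/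
def IsAdmissible {V : Type*} [AddCommGroup V] [Module (ZMod 2) V] (Q : V → ZMod 2) : Prop :=
  ∃ (ℓ : ℕ) (b : Module.Basis (Fin ℓ) (ZMod 2) V),
    (∀ i, Q (b i) = 1) ∧ (∀ i, ∃ j, polarF Q (b i) (b j) = 1)

lemma zmod2_eq_one : ∀ a : ZMod 2, a ≠ 0 → a = 1 := by decide

lemma zmod2_eq_zero : ∀ a : ZMod 2, a ≠ 1 → a = 0 := by decide

/-- Key extraction lemma: a spanning family with the admissibility properties yields
admissibility. -/
lemma admissible_of_span {W : Type*} [AddCommGroup W] [Module (ZMod 2) W]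
    (Q : W → ZMod 2)
    (Bl : W →ₗ[ZMod 2] W →ₗ[ZMod 2] ZMod 2)
    (hBl : ∀ u v, Bl u v = polarF Q u v)
    {ι : Type*} [Fintype ι] (x : ι → W)
    (hspan : Submodule.span (ZMod 2) (Set.range x) = ⊤)
    (hone : ∀ i, Q (x i) = 1)
    (hpair : ∀ i, ∃ j, Bl (x i) (x j) = 1) :
    IsAdmissible Q := by
  obtain ⟨t, hts, hspan', hli⟩ := exists_linearIndependent (ZMod 2) (Set.range x)
  rw [hspan] at hspan'
  have htfin : t.Finite := (Set.finite_range x).subset hts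
  haveI := htfin.fintype
  let b : Module.Basis t (ZMod 2) W := Module.Basis.mk hli (by rw [Subtype.range_coe, hspan'])
  have hb : ∀ s : t, b s = (s : W) := fun s => Module.Basis.mk_apply hli _ s
  -- every element of t pairs with an element of t
  have key : ∀ u ∈ t, ∃ w ∈ t, Bl u w = 1 := by
    intro u hu
    obtain ⟨i, hi⟩ := hts hu
    obtain ⟨j, hj⟩ := hpair i
    by_contra hcon
    push_neg at hcon
    have hker : t ⊆ (LinearMap.ker (Bl u) : Set W) := by
      intro w hw
      exact LinearMap.mem_ker.mpr (zmod2_eq_zero _ (hcon w hw))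
    have : Submodule.span (ZMod 2) t ≤ LinearMap.ker (Bl u) := Submodule.span_le.mpr hker
    rw [hspan'] at this
    have : Bl u (x j) = 0 := this (Submodule.mem_top : x j ∈ ⊤)
    rw [hi] at hj
    rw [hj] at this
    exact one_ne_zero this
  let e := Fintype.equivFin t
  refine ⟨Fintype.card t, b.reindex e, ?_, ?_⟩
  · intro i
    rw [Module.Basis.reindex_apply, hb]
    obtain ⟨k, hk⟩ := hts (e.symm i).2
    rw [← hk]; exact hone k
  · intro i
    rw [Module.Basis.reindex_apply, hb]
    obtain ⟨w, hw, hw1⟩ := key _ (e.symm i).2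
    refine ⟨e ⟨w, hw⟩, ?_⟩
    rw [Module.Basis.reindex_apply, Equiv.symm_apply_apply, hb]
    rw [← hBl]; exact hw1

/-- If `Q = q ⊕ 0^{⊕n}` with respect to a splitting `V = V₁ ⊕ V₂` (with `V₁` nontrivial,
`Q` vanishing on `V₂`, and `Q(v₁+v₂) = Q(v₁)`), then `Q` is admissible iff `q = Q|_{V₁}` is. -/
theorem statement_1 {V : Type*} [AddCommGroup V] [Module (ZMod 2) V]
    [FiniteDimensional (ZMod 2) V]
    (Q : V → ZMod 2) (hQ : IsQuadraticForm Q)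
    (V₁ V₂ : Submodule (ZMod 2) V) (hcompl : IsCompl V₁ V₂) (hV₁ : V₁ ≠ ⊥)
    (hzero : ∀ v ∈ V₂, Q v = 0)
    (hsplit : ∀ v₁ ∈ V₁, ∀ v₂ ∈ V₂, Q (v₁ + v₂) = Q v₁) :
    IsAdmissible Q ↔ IsAdmissible (fun x : V₁ => Q ↑x) := by
  obtain ⟨hsq, ha1, hs1, ha2, hs2⟩ := hQ
  set q : V₁ → ZMod 2 := fun x : V₁ => Q ↑x with hqdef
  let Bl : V →ₗ[ZMod 2] V →ₗ[ZMod 2] ZMod 2 :=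
    LinearMap.mk₂ (ZMod 2) (polarF Q) ha1
      (fun a u v => by rw [smul_eq_mul]; exact hs1 a u v) ha2
      (fun a u v => by rw [smul_eq_mul]; exact hs2 a u v)
  have hBl : ∀ u v, Bl u v = polarF Q u v := fun u v => rfl
  let Bl₁ : V₁ →ₗ[ZMod 2] V₁ →ₗ[ZMod 2] ZMod 2 := Bl.compl₁₂ V₁.subtype V₁.subtype
  have hpolq : ∀ u v : V₁, polarF q u v = polarF Q ↑u ↑v := by
    intro u v; simp [polarF, hqdef]
  have hBl₁ : ∀ u v : V₁, Bl₁ u v = polarF q u v := by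
    intro u v; rw [hpolq]; rfl
  constructor
  · rintro ⟨m, b, hb1, hb2⟩
    let π := V₁.projectionOnto V₂ hcompl
    have hF : ∀ v : V, Q v = Q ↑(π v) := by
      intro v
      have h2 : v - ↑(π v) ∈ V₂ := by
        rw [← Submodule.projectionOnto_apply_eq_zero_iff hcompl (q := V₂)]
        simp [π, map_sub, -Submodule.coe_projectionOnto_apply]
      have := hsplit ↑(π v) (π v).2 (v - ↑(π v)) h2
      rw [add_sub_cancel] at this
      exact this
    have hpol : ∀ u v : V, polarF q (π u) (π v) = polarF Q u v := by
      intro u v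
      simp only [polarF, hqdef]
      rw [← map_add, ← hF, ← hF, ← hF]
    apply admissible_of_span q Bl₁ hBl₁ (fun i : Fin m => π (b i))
    · have : Set.range (fun i : Fin m => π (b i)) = π '' (Set.range b) := by
        rw [← Set.range_comp]; rfl
      rw [this, Submodule.span_image, b.span_eq, Submodule.map_top,
        Submodule.range_projectionOnto]
    · intro i; show Q ↑(π (b i)) = 1; rw [← hF]; exact hb1 i
    · intro i
      obtain ⟨j, hj⟩ := hb2 i
      exact ⟨j, by rw [hBl₁, hpol]; exact hj⟩
  · rintro ⟨ℓ, c, hc1, hc2⟩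
    -- ℓ ≠ 0
    have hℓ : ℓ ≠ 0 := by
      rintro rfl
      apply hV₁
      rw [Submodule.eq_bot_iff]
      intro v hv
      have : (⟨v, hv⟩ : V₁) = 0 := by
        have := c.repr.map_eq_zero_iff (x := (⟨v, hv⟩ : V₁))
        exact this.mp (Subsingleton.elim _ _)
      exact congrArg Subtype.val this
    haveI : NeZero ℓ := ⟨hℓ⟩
    let d := Module.finBasis (ZMod 2) V₂
    set n := Module.finrank (ZMod 2) V₂
    let x : Fin ℓ ⊕ Fin n → V := Sum.elim (fun i => ↑(c i)) (fun k => ↑(d k) + ↑(c 0))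
    apply admissible_of_span Q Bl hBl x
    · rw [eq_top_iff, ← codisjoint_iff.mp hcompl.codisjoint]
      apply sup_le
      · intro v hv
        have hvt : (⟨v, hv⟩ : V₁) ∈ Submodule.span (ZMod 2) (Set.range c) := by
          rw [c.span_eq]; trivial
        have : v ∈ Submodule.map V₁.subtype (Submodule.span (ZMod 2) (Set.range c)) :=
          ⟨⟨v, hv⟩, hvt, rfl⟩
        rw [Submodule.map_span] at this
        refine Submodule.span_mono ?_ this
        rintro w ⟨u, ⟨i, rfl⟩, rfl⟩
        exact ⟨Sum.inl i, rfl⟩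
      · intro v hv
        have hvt : (⟨v, hv⟩ : V₂) ∈ Submodule.span (ZMod 2) (Set.range d) := by
          rw [d.span_eq]; trivial
        have : v ∈ Submodule.map V₂.subtype (Submodule.span (ZMod 2) (Set.range d)) :=
          ⟨⟨v, hv⟩, hvt, rfl⟩
        rw [Submodule.map_span] at this
        refine Submodule.span_le.mpr ?_ this
        rintro w ⟨u, ⟨k, rfl⟩, rfl⟩
        have h1 : x (Sum.inr k) ∈ Submodule.span (ZMod 2) (Set.range x) :=
          Submodule.subset_span ⟨Sum.inr k, rfl⟩
        have h2 : x (Sum.inl 0) ∈ Submodule.span (ZMod 2) (Set.range x) :=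
          Submodule.subset_span ⟨Sum.inl 0, rfl⟩
        have : (↑(d k) : V) = x (Sum.inr k) - x (Sum.inl 0) := by
          simp [x]
        rw [Submodule.coe_subtype, this]
        exact sub_mem h1 h2
    · rintro (i | k)
      · exact hc1 i
      · show Q (↑(d k) + ↑(c 0)) = 1
        rw [add_comm, hsplit _ (c 0).2 _ (d k).2]
        exact hc1 0
    · have hBd : ∀ (k : Fin n) (w : V₁), Bl ↑(d k) ↑w = 0 := by
        intro k w
        rw [hBl]
        show Q (↑(d k) + ↑w) - Q ↑(d k) - Q ↑w = 0
        rw [add_comm, hsplit _ w.2 _ (d k).2, hzero _ (d k).2]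
        ring
      rintro (i | k)
      · obtain ⟨j, hj⟩ := hc2 i
        refine ⟨Sum.inl j, ?_⟩
        show Bl ↑(c i) ↑(c j) = 1
        rw [hBl, ← hpolq]; exact hj
      · obtain ⟨j, hj⟩ := hc2 0
        refine ⟨Sum.inl j, ?_⟩
        show Bl (↑(d k) + ↑(c 0)) ↑(c j) = 1
        rw [map_add, LinearMap.add_apply, hBd]
        rw [hBl, ← hpolq, hj]
        ring
end

section
/- For every m ≥ 1, the quadratic form H₋ ⊕ H₊^{⊕(m−1)} on 𝔽₂^{2m} is admissible. -/
section Aux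
variable (n : ℕ)

abbrev Vsp (n : ℕ) := (ZMod 2 × ZMod 2) × (Fin n → ZMod 2 × ZMod 2)

/-- The quadratic form. -/
def Qn : Vsp n → ZMod 2 := fun p => Hminus p.1 + ∑ i, Hplus (p.2 i)

/-- The basis vectors. -/
def vv : (Fin 2 ⊕ (Fin n × Fin 2)) → Vsp n :=
  Sum.elim (fun k => ((![(1, 0), (0, 1)] : Fin 2 → ZMod 2 × ZMod 2) k, 0))
    (fun jk => ((1, 0), Pi.single jk.1 ((![(1, 0), (0, 1)] : Fin 2 → ZMod 2 × ZMod 2) jk.2)))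

/-- Explicit linear equiv from functions on the index type to the space. -/
def auxE : ((Fin 2 ⊕ (Fin n × Fin 2)) → ZMod 2) ≃ₗ[ZMod 2] Vsp n where
  toFun f := ((f (.inl 0), f (.inl 1)), fun j => (f (.inr (j, 0)), f (.inr (j, 1))))
  invFun p := Sum.elim (![p.1.1, p.1.2]) (fun jk => ![(p.2 jk.1).1, (p.2 jk.1).2] jk.2)
  map_add' f g := rfl
  map_smul' c f := rfl
  left_inv f := by
    funext x
    rcases x with k | ⟨j, k⟩ <;> fin_cases k <;> rfl
  right_inv p := rfl

def auxTfun : Vsp n → Vsp n :=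
  fun p => ((p.1.1 + ∑ i, ((p.2 i).1 + (p.2 i).2), p.1.2), p.2)

lemma auxT_invol : Function.Involutive (auxTfun n) := by
  intro p
  simp only [auxTfun]
  rw [add_assoc, CharTwo.add_self_eq_zero, add_zero]

/-- The shearing involution. -/
def auxT : Vsp n ≃ₗ[ZMod 2] Vsp n :=
  LinearEquiv.ofInvolutive
    { toFun := auxTfun n
      map_add' := by
        intro p q
        simp only [auxTfun]
        ext
        · simp [Finset.sum_add_distrib]; ring
        · rfl
        · rfl
        · rfl
      map_smul' := by
        intro c p
        simp only [auxTfun]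
        ext
        · simp [Finset.mul_sum, mul_add]
        · rfl
        · rfl
        · rfl }
    (auxT_invol n)

/-- `vv` is a basis. -/
lemma exists_basis_vv :
    ∃ b : Module.Basis (Fin 2 ⊕ (Fin n × Fin 2)) (ZMod 2) (Vsp n), ∀ x, b x = vv n x := by
  classical
  refine ⟨(Pi.basisFun (ZMod 2) _).map ((auxE n).trans (auxT n)), fun x => ?_⟩
  rw [Module.Basis.map_apply, Pi.basisFun_apply]
  show (auxT n) ((auxE n) _) = _
  rcases x with k | ⟨j, k⟩ <;> fin_cases k <;>
    · simp only [auxE, auxT, auxTfun, LinearEquiv.ofInvolutive, LinearEquiv.coe_mk,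
        LinearMap.coe_mk, AddHom.coe_mk, LinearEquiv.trans_apply, vv, Sum.elim_inl, Sum.elim_inr]
      dsimp only [DFunLike.coe, EquivLike.coe, LinearEquiv.toEquiv]
      ext <;>
        simp [Pi.single_apply, Prod.ext_iff, Finset.sum_ite_eq', apply_ite Prod.fst,
          apply_ite Prod.snd]

lemma Qn_vv (x : Fin 2 ⊕ (Fin n × Fin 2)) : Qn n (vv n x) = 1 := by
  classical
  rcases x with k | ⟨j, k⟩ <;> fin_cases k <;>
    simp [Qn, vv, Hminus, Hplus, Pi.single_apply, apply_ite Prod.fst, apply_ite Prod.snd,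
      apply_ite (fun p : ZMod 2 × ZMod 2 => p.1 * p.2), Finset.sum_ite_eq']

/-- the partner index -/
def pa : (Fin 2 ⊕ (Fin n × Fin 2)) → (Fin 2 ⊕ (Fin n × Fin 2)) :=
  Sum.elim (fun k => .inl (1 - k)) (fun jk => .inr (jk.1, 1 - jk.2))

lemma polar_vv (x : Fin 2 ⊕ (Fin n × Fin 2)) :
    polarF (Qn n) (vv n x) (vv n (pa n x)) = 1 := by
  classical
  rcases x with k | ⟨j, k⟩ <;> fin_cases k <;>
    · simp only [pa, vv, Sum.elim_inl, Sum.elim_inr, polarF]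
      norm_num
      simp [Qn, Hminus, Hplus, Prod.ext_iff, Pi.single_apply, apply_ite Prod.fst,
        apply_ite Prod.snd, apply_ite (fun p : ZMod 2 × ZMod 2 => p.1 * p.2),
        Finset.sum_ite_eq', ← Pi.single_add, Prod.mk_add_mk]
      all_goals decide

end Aux

/-- For every m ≥ 1, the quadratic form H₋ ⊕ H₊^{⊕(m−1)} on 𝔽₂^{2m} is admissible. -/
theorem statement_3 (m : ℕ) (hm : 1 ≤ m) :
    IsAdmissible
      (fun p : (ZMod 2 × ZMod 2) × (Fin (m - 1) → ZMod 2 × ZMod 2) =>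
        Hminus p.1 + ∑ i, Hplus (p.2 i)) := by
  classical
  obtain ⟨b, hbv⟩ := exists_basis_vv (m - 1)
  set e := Fintype.equivFin (Fin 2 ⊕ (Fin (m - 1) × Fin 2)) with he
  refine ⟨_, b.reindex e, fun i => ?_, fun i => ?_⟩
  · rw [Module.Basis.reindex_apply, hbv]
    exact Qn_vv (m - 1) (e.symm i)
  · refine ⟨e (pa (m - 1) (e.symm i)), ?_⟩
    rw [Module.Basis.reindex_apply, Module.Basis.reindex_apply, Equiv.symm_apply_apply, hbv, hbv]
    exact polar_vv (m - 1) (e.symm i)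
end

section
/- For every m ≥ 2, the quadratic form H₊^{⊕m} on 𝔽₂^{2m}, given by Q(z₁,…,z_{2m}) = z₁z₂ + z₃z₄ + ⋯ + z_{2m−1}z_{2m}, is admissible. -/
namespace Statement5Aux

variable {m : ℕ} [NeZero m]

/-- shorthand for `Pi.single` into our space -/
noncomputable def sgl (i : Fin m) (p : ZMod 2 × ZMod 2) : Fin m → ZMod 2 × ZMod 2 :=
  Pi.single i p

/-- the quadratic form -/
noncomputable def QF (v : Fin m → ZMod 2 × ZMod 2) : ZMod 2 := ∑ i, Hplus (v i)

/-- The basis vectors: `(i,0) ↦ e_i(1,1)`, `(i,1) ↦ e_i(1,0) + e_{i+1}(1,1)`. -/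
noncomputable def wvec (p : Fin m × Fin 2) : Fin m → ZMod 2 × ZMod 2 :=
  if p.2 = 0 then sgl p.1 (1, 1)
  else sgl p.1 (1, 0) + sgl (p.1 + 1) (1, 1)

lemma wvec0 (i : Fin m) : wvec (i, 0) = sgl i (1, 1) := by simp [wvec]

lemma wvec1 (i : Fin m) : wvec (i, 1) = sgl i (1, 0) + sgl (i + 1) (1, 1) := by
  simp [wvec]

lemma hplus_zero : Hplus (0 : ZMod 2 × ZMod 2) = 0 := rfl

omit [NeZero m] in
lemma Q_single (i : Fin m) (p : ZMod 2 × ZMod 2) : QF (sgl i p) = Hplus p := by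
  have h : ∀ j, Hplus (sgl i p j) = (Pi.single i (Hplus p) : Fin m → ZMod 2) j := by
    intro j
    rcases eq_or_ne j i with rfl | hj
    · simp [sgl]
    · simp [sgl, Pi.single_apply, hj, hplus_zero]
  unfold QF
  simp only [h]
  simp [Finset.sum_pi_single']

omit [NeZero m] in
lemma Q_single2 {i i' : Fin m} (h : i ≠ i') (p q : ZMod 2 × ZMod 2) :
    QF (sgl i p + sgl i' q) = Hplus p + Hplus q := by
  have hfun : ∀ j, Hplus ((sgl i p + sgl i' q) j)
      = (Pi.single i (Hplus p) : Fin m → ZMod 2) j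
        + (Pi.single i' (Hplus q) : Fin m → ZMod 2) j := by
    intro j
    rcases eq_or_ne j i with rfl | hj
    · simp [sgl, Pi.single_apply, h, Ne.symm h]
    · rcases eq_or_ne j i' with rfl | hj'
      · simp [sgl, Pi.single_apply, hj]
      · simp [sgl, Pi.single_apply, hj, hj', hplus_zero]
  unfold QF
  simp only [hfun, Finset.sum_add_distrib]
  simp [Finset.sum_pi_single']

lemma self_ne_add_one (hm : 2 ≤ m) (i : Fin m) : i ≠ i + 1 := by
  intro h
  have hi := i.isLt
  have hv1 : ((1 : Fin m) : ℕ) = 1 := by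
    rw [Fin.val_one']; exact Nat.mod_eq_of_lt (by omega)
  have h2 := congrArg Fin.val h
  rw [Fin.val_add, hv1] at h2
  rcases Nat.lt_or_ge (i.val + 1) m with hlt | hge
  · rw [Nat.mod_eq_of_lt hlt] at h2; omega
  · have hm' : i.val + 1 = m := by omega
    rw [hm', Nat.mod_self] at h2; omega

omit [NeZero m] in
lemma sgl_add (i : Fin m) (p q : ZMod 2 × ZMod 2) : sgl i (p + q) = sgl i p + sgl i q := by
  simp [sgl, Pi.single_add]

lemma Qw0 (i : Fin m) : QF (wvec (i, 0)) = 1 := by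
  rw [wvec0, Q_single]; decide

lemma Qw1 (hm : 2 ≤ m) (i : Fin m) : QF (wvec (i, 1)) = 1 := by
  rw [wvec1, Q_single2 (self_ne_add_one hm i)]; decide

lemma polar01 (hm : 2 ≤ m) (i : Fin m) :
    polarF QF (wvec (i, 0)) (wvec (i, 1)) = 1 := by
  have hsum : wvec (i, 0) + wvec (i, 1) = sgl i (0, 1) + sgl (i + 1) (1, 1) := by
    rw [wvec0, wvec1, ← add_assoc, ← sgl_add]
    congr 1
  unfold polarF
  rw [hsum, Q_single2 (self_ne_add_one hm i), Qw0, Qw1 hm]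
  decide

lemma polar10 (hm : 2 ≤ m) (i : Fin m) :
    polarF QF (wvec (i, 1)) (wvec (i, 0)) = 1 := by
  have : wvec (i, 1) + wvec (i, 0) = wvec (i, 0) + wvec (i, 1) := add_comm _ _
  unfold polarF
  rw [this]
  have h := polar01 hm i
  unfold polarF at h
  rw [show QF (wvec (m := m) (i, 0) + wvec (i, 1)) - QF (wvec (i, 1)) - QF (wvec (i, 0))
      = QF (wvec (i, 0) + wvec (i, 1)) - QF (wvec (i, 0)) - QF (wvec (i, 1)) from
    sub_right_comm _ _ _]
  exact h

lemma span_top (hm : 2 ≤ m) :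
    ⊤ ≤ Submodule.span (ZMod 2) (Set.range (wvec (m := m))) := by
  classical
  intro x _
  have hx : ∑ i, sgl i (x i) = x := by
    simpa [sgl] using Finset.univ_sum_single x
  rw [← hx]
  refine Submodule.sum_mem _ fun i _ => ?_
  have hmem10 : sgl i ((1 : ZMod 2), (0 : ZMod 2))
      ∈ Submodule.span (ZMod 2) (Set.range (wvec (m := m))) := by
    have heq : sgl i ((1 : ZMod 2), (0 : ZMod 2)) = wvec (i, 1) - wvec (i + 1, 0) := by
      rw [wvec1, wvec0]
      abel
    rw [heq]
    exact sub_mem (Submodule.subset_span ⟨(i, 1), rfl⟩)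
      (Submodule.subset_span ⟨(i + 1, 0), rfl⟩)
  have hmem01 : sgl i ((0 : ZMod 2), (1 : ZMod 2))
      ∈ Submodule.span (ZMod 2) (Set.range (wvec (m := m))) := by
    have heq : sgl i ((0 : ZMod 2), (1 : ZMod 2)) = wvec (i, 0) - sgl i (1, 0) := by
      rw [wvec0, show ((1 : ZMod 2), (1 : ZMod 2)) = (1, 0) + (0, 1) from by decide,
        sgl_add]
      abel
    rw [heq]
    exact sub_mem (Submodule.subset_span ⟨(i, 0), rfl⟩) hmem10
  have hdecomp : sgl i (x i) = (x i).1 • sgl i (1, 0) + (x i).2 • sgl i (0, 1) := by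
    simp only [sgl, ← Pi.single_smul, ← Pi.single_add]
    congr 1
    ext <;> simp
  rw [hdecomp]
  exact add_mem (Submodule.smul_mem _ _ hmem10) (Submodule.smul_mem _ _ hmem01)

end Statement5Aux

open Statement5Aux in
/-- For every m ≥ 2, the quadratic form H₊^{⊕m} on 𝔽₂^{2m} is admissible. -/
theorem statement_5 (m : ℕ) (hm : 2 ≤ m) :
    IsAdmissible (fun v : Fin m → ZMod 2 × ZMod 2 => ∑ i, Hplus (v i)) := by
  haveI : NeZero m := ⟨by omega⟩
  haveI : Fact (Nat.Prime 2) := ⟨by norm_num⟩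
  classical
  have hQF : (fun v : Fin m → ZMod 2 × ZMod 2 => ∑ i, Hplus (v i)) = QF := rfl
  rw [hQF]
  have hcard : Fintype.card (Fin m × Fin 2)
      = Module.finrank (ZMod 2) (Fin m → ZMod 2 × ZMod 2) := by
    rw [Module.finrank_pi_fintype]
    simp [Module.finrank_prod]
  let b : Module.Basis (Fin m × Fin 2) (ZMod 2) (Fin m → ZMod 2 × ZMod 2) :=
    basisOfTopLeSpanOfCardEqFinrank wvec (span_top hm) hcard
  have hb : ∀ p, b p = wvec p := fun p => by
    simp [b, coe_basisOfTopLeSpanOfCardEqFinrank]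
  refine ⟨m * 2, b.reindex finProdFinEquiv, ?_, ?_⟩
  · intro i
    rw [Module.Basis.reindex_apply, hb]
    obtain ⟨k, s⟩ := finProdFinEquiv.symm i
    fin_cases s
    · exact Qw0 k
    · exact Qw1 hm k
  · intro i
    rw [Module.Basis.reindex_apply, hb]
    obtain ⟨k, s⟩ := finProdFinEquiv.symm i
    fin_cases s
    · refine ⟨finProdFinEquiv (k, 1), ?_⟩
      rw [Module.Basis.reindex_apply, Equiv.symm_apply_apply, hb]
      exact polar01 hm k
    · refine ⟨finProdFinEquiv (k, 0), ?_⟩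
      rw [Module.Basis.reindex_apply, Equiv.symm_apply_apply, hb]
      exact polar10 hm k
end

section
/- The quadratic form H₊ ⊕ Q₁ on 𝔽₂³, given by Q(x,y,z) = xy + z², is not admissible. -/
/-- The quadratic form H₊ ⊕ Q₁ on 𝔽₂³, given by Q(x,y,z) = xy + z², is not admissible. -/
theorem statement_6 :
    ¬ IsAdmissible (fun p : (ZMod 2 × ZMod 2) × ZMod 2 => Hplus p.1 + Qone p.2) := by
  rintro ⟨ℓ, b, hQ, hB⟩
  set Q : (ZMod 2 × ZMod 2) × ZMod 2 → ZMod 2 :=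
    fun p => Hplus p.1 + Qone p.2 with hQdef
  have hl : ℓ = 3 := by
    have h1 := Module.finrank_eq_card_basis b
    have h2 : Module.finrank (ZMod 2) ((ZMod 2 × ZMod 2) × ZMod 2) = 3 := by
      simp [Module.finrank_prod]
    simp [h2] at h1
    omega
  subst hl
  have key : ∀ v : (ZMod 2 × ZMod 2) × ZMod 2,
      Q v = 1 → (∃ w, polarF Q v w = 1) →
      v = ((1,0),1) ∨ v = ((0,1),1) ∨ v = ((1,1),0) := by
    decide
  have hx : ∀ i, b i = ((1,0),1) ∨ b i = ((0,1),1) ∨ b i = ((1,1),0) := by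
    intro i
    exact key _ (hQ i) (by obtain ⟨j, hj⟩ := hB i; exact ⟨b j, hj⟩)
  have hne01 : b 0 ≠ b 1 := fun h => by simpa using b.injective h
  have hne02 : b 0 ≠ b 2 := fun h => by simpa using b.injective h
  have hne12 : b 1 ≠ b 2 := fun h => by simpa using b.injective h
  have hsum : b 0 + b 1 + b 2 = 0 := by
    rcases hx 0 with h0 | h0 | h0 <;> rcases hx 1 with h1 | h1 | h1 <;>
      rcases hx 2 with h2 | h2 | h2 <;>
      first
        | exact absurd (h0.trans h1.symm) hne01
        | exact absurd (h0.trans h2.symm) hne02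
        | exact absurd (h1.trans h2.symm) hne12
        | (rw [h0, h1, h2]; decide)
  have hli := b.linearIndependent
  have := Fintype.linearIndependent_iff.mp hli (fun _ => 1) (by
    simpa [Fin.sum_univ_three] using hsum) 0
  simp at this
end

section
/- For every m ≥ 2, the quadratic form H₊^{⊕m} ⊕ Q₁ on 𝔽₂^{2m+1}, given by Q(z₁,…,z_{2m},w) = z₁z₂ + ⋯ + z_{2m−1}z_{2m} + w², is admissible. -/
namespace S7aux

abbrev V (m : ℕ) := (Fin m → ZMod 2 × ZMod 2) × ZMod 2
abbrev ι (m : ℕ) := (Fin m ⊕ Fin m) ⊕ Unit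

def δ {m : ℕ} (j : Fin m) : ZMod 2 := if (j : ℕ) < 2 then 1 else 0

lemma sum_δ (m : ℕ) (hm : 2 ≤ m) : ∑ j : Fin m, δ j = 0 := by
  have h0 : (0:ℕ) < m := by omega
  have h1 : (1:ℕ) < m := by omega
  have key : ∀ j : Fin m, δ j =
      (if j = (⟨0, h0⟩ : Fin m) then (1:ZMod 2) else 0) +
      (if j = (⟨1, h1⟩ : Fin m) then (1:ZMod 2) else 0) := by
    intro j
    unfold δ
    rcases Nat.lt_or_ge (j : ℕ) 2 with h | h
    · interval_cases hj : (j : ℕ)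
      · simp [Fin.ext_iff, hj]
      · simp [Fin.ext_iff, hj]
    · have : ¬ (j:ℕ) < 2 := by omega
      simp only [this, if_false, Fin.ext_iff]
      rw [if_neg (by omega), if_neg (by omega)]
      simp
  rw [Finset.sum_congr rfl (fun j _ => key j)]
  rw [Finset.sum_add_distrib]
  simp only [Finset.sum_ite_eq', Finset.mem_univ, if_true]
  decide

variable (m : ℕ)

/-- coordinates → vector -/
def F (c : ι m → ZMod 2) : V m :=
  (fun j => (c (.inl (.inl j)) + c (.inr ()) * δ j,
             c (.inl (.inr j)) + c (.inr ()) * δ j),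
   ∑ k, c k)

/-- vector → coordinates -/
def G (p : V m) : ι m → ZMod 2 :=
  fun k =>
    match k with
    | .inl (.inl j) => (p.1 j).1 + ((∑ i, ((p.1 i).1 + (p.1 i).2)) + p.2) * δ j
    | .inl (.inr j) => (p.1 j).2 + ((∑ i, ((p.1 i).1 + (p.1 i).2)) + p.2) * δ j
    | .inr _ => (∑ i, ((p.1 i).1 + (p.1 i).2)) + p.2

lemma sum_ι (c : ι m → ZMod 2) :
    ∑ k, c k = (∑ i, c (.inl (.inl i))) + (∑ i, c (.inl (.inr i))) + c (.inr ()) := by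
  rw [Fintype.sum_sum_type, Fintype.sum_sum_type]
  simp [add_assoc]

variable (hm : 2 ≤ m)

lemma GF (c : ι m → ZMod 2) : G m (F m c) = c := by
  have hs : (∑ i, ((( F m c).1 i).1 + ((F m c).1 i).2)) + (F m c).2 = c (.inr ()) := by
    simp only [F]
    rw [sum_ι]
    rw [Finset.sum_congr rfl (fun j _ => by ring_nf :
      ∀ j ∈ Finset.univ, (c (.inl (.inl j)) + c (.inr ()) * δ j)
        + (c (.inl (.inr j)) + c (.inr ()) * δ j)
        = (c (.inl (.inl j)) + c (.inl (.inr j))) + (c (.inr ()) * δ j + c (.inr ()) * δ j))]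
    simp only [CharTwo.add_self_eq_zero, add_zero]
    rw [Finset.sum_add_distrib]
    abel_nf
    simp [CharTwo.two_eq_zero]
  funext k
  match k with
  | .inl (.inl j) =>
      show ((F m c).1 j).1 + _ * δ j = _
      rw [hs]
      show (c (.inl (.inl j)) + c (.inr ()) * δ j) + c (.inr ()) * δ j = _
      rw [add_assoc, CharTwo.add_self_eq_zero, add_zero]
  | .inl (.inr j) =>
      show ((F m c).1 j).2 + _ * δ j = _
      rw [hs]
      show (c (.inl (.inr j)) + c (.inr ()) * δ j) + c (.inr ()) * δ j = _
      rw [add_assoc, CharTwo.add_self_eq_zero, add_zero]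
  | .inr _ => exact hs

end S7aux

namespace S7aux

variable (m : ℕ)

lemma FG (p : V m) : F m (G m p) = p := by
  have G_inr : G m p (Sum.inr ()) = (∑ i, ((p.1 i).1 + (p.1 i).2)) + p.2 := rfl
  have hC : G m p (Sum.inr ()) = (∑ i, (p.1 i).1) + (∑ i, (p.1 i).2) + p.2 := by
    show (∑ i, ((p.1 i).1 + (p.1 i).2)) + p.2 = _
    rw [Finset.sum_add_distrib]
  have hs : ∑ k, G m p k = p.2 := by
    rw [sum_ι]
    show (∑ i, ((p.1 i).1 + (_) * δ i)) + (∑ i, ((p.1 i).2 + (_) * δ i)) + _ = p.2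
    rw [G_inr]
    simp only [Finset.sum_add_distrib]
    abel_nf
    simp [CharTwo.two_eq_zero]
  have hinr := hC
  refine Prod.ext ?_ ?_
  · funext j
    refine Prod.ext ?_ ?_
    · show G m p (.inl (.inl j)) + G m p (.inr ()) * δ j = (p.1 j).1
      rw [G_inr]
      show ((p.1 j).1 + _ * δ j) + _ * δ j = (p.1 j).1
      rw [add_assoc, CharTwo.add_self_eq_zero, add_zero]
    · show G m p (.inl (.inr j)) + G m p (.inr ()) * δ j = (p.1 j).2
      rw [G_inr]
      show ((p.1 j).2 + _ * δ j) + _ * δ j = (p.1 j).2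
      rw [add_assoc, CharTwo.add_self_eq_zero, add_zero]
  · exact hs

end S7aux

namespace S7aux

variable (m : ℕ)

lemma F_add (c c' : ι m → ZMod 2) : F m (c + c') = F m c + F m c' := by
  unfold F
  refine Prod.ext ?_ ?_
  · funext j
    simp only [Pi.add_apply, Prod.mk_add_mk, Prod.ext_iff]
    constructor <;> ring
  · simp [Finset.sum_add_distrib]

lemma F_smul (r : ZMod 2) (c : ι m → ZMod 2) : F m (r • c) = r • F m c := by
  unfold F
  refine Prod.ext ?_ ?_
  · funext j
    simp only [Pi.smul_apply, smul_eq_mul, Prod.smul_mk, Prod.ext_iff]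
    constructor <;> ring
  · simp only [Pi.smul_apply, smul_eq_mul, Prod.smul_mk]
    rw [sum_ι, sum_ι, mul_add, mul_add, Finset.mul_sum, Finset.mul_sum]

def E : (ι m → ZMod 2) ≃ₗ[ZMod 2] V m where
  toFun := F m
  map_add' := F_add m
  map_smul' := F_smul m
  invFun := G m
  left_inv := GF m
  right_inv := FG m

noncomputable def bas : Module.Basis (ι m) (ZMod 2) (V m) := Module.Basis.ofEquivFun (E m).symm

lemma bas_apply (k : ι m) : bas m k = F m (Pi.single k 1) := by
  simp only [bas, Module.Basis.coe_ofEquivFun, LinearEquiv.symm_symm]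
  show F m _ = F m _
  congr 1

end S7aux

noncomputable section
namespace S7aux

variable (m : ℕ)

def Qf : V m → ZMod 2 := fun p => (∑ i, Hplus (p.1 i)) + Qone p.2

lemma single_sum (k : ι m) : ∑ j, Pi.single k (1 : ZMod 2) j = 1 := by
  simp [Pi.single_apply, Finset.sum_ite_eq']

lemma bas_inl_inl (i : Fin m) :
    bas m (.inl (.inl i)) = (fun j => ((if j = i then 1 else 0 : ZMod 2), 0), 1) := by
  rw [bas_apply]
  unfold F
  refine Prod.ext ?_ (single_sum m _)
  funext j
  simp [Pi.single_apply]

lemma bas_inl_inr (i : Fin m) :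
    bas m (.inl (.inr i)) = (fun j => ((0 : ZMod 2), (if j = i then 1 else 0 : ZMod 2)), 1) := by
  rw [bas_apply]
  unfold F
  refine Prod.ext ?_ (single_sum m _)
  funext j
  simp [Pi.single_apply]

lemma bas_inr : bas m (.inr ()) = (fun j => (δ j, δ j), 1) := by
  rw [bas_apply]
  unfold F
  refine Prod.ext ?_ (single_sum m _)
  funext j
  simp [Pi.single_apply]

variable (hm : 2 ≤ m)
include hm

lemma Qf_bas (k : ι m) : Qf m (bas m k) = 1 := by
  match k with
  | .inl (.inl i) =>
      rw [bas_inl_inl]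
      simp [Qf, Hplus, Qone]
  | .inl (.inr i) =>
      rw [bas_inl_inr]
      simp [Qf, Hplus, Qone]
  | .inr _ =>
      rw [bas_inr]
      simp only [Qf, Hplus, Qone]
      have : ∀ j : Fin m, δ j * δ j = δ j := by
        intro j; unfold δ; split_ifs <;> simp
      simp only [this, sum_δ m hm]
      simp

lemma polar_bas (k : ι m) : ∃ k', polarF (Qf m) (bas m k) (bas m k') = 1 := by
  have h0 : (0:ℕ) < m := by omega
  match k with
  | .inl (.inl i) =>
      refine ⟨.inl (.inr i), ?_⟩
      rw [polarF, Qf_bas m hm, Qf_bas m hm, bas_inl_inl, bas_inl_inr]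
      have : Qf m (((fun j => ((if j = i then 1 else 0 : ZMod 2), 0), 1) : V m) +
          ((fun j => ((0:ZMod 2), (if j = i then 1 else 0 : ZMod 2))), 1)) = 1 := by
        simp only [Qf, Hplus, Qone, Prod.fst_add, Prod.snd_add, Pi.add_apply,
          Prod.fst_add, Prod.snd_add]
        simp [Finset.sum_ite_eq', mul_ite, CharTwo.add_self_eq_zero]
      rw [this]
      decide
  | .inl (.inr i) =>
      refine ⟨.inl (.inl i), ?_⟩
      rw [polarF, Qf_bas m hm, Qf_bas m hm, bas_inl_inl, bas_inl_inr]
      have : Qf m (((fun j => ((0:ZMod 2), (if j = i then 1 else 0 : ZMod 2))), 1) +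
          ((fun j => ((if j = i then 1 else 0 : ZMod 2), 0), 1) : V m)) = 1 := by
        simp only [Qf, Hplus, Qone, Prod.fst_add, Prod.snd_add, Pi.add_apply]
        simp [Finset.sum_ite_eq', mul_ite, CharTwo.add_self_eq_zero]
      rw [this]
      decide
  | .inr _ =>
      refine ⟨.inl (.inr ⟨0, h0⟩), ?_⟩
      rw [polarF, Qf_bas m hm, Qf_bas m hm, bas_inr, bas_inl_inr]
      have : Qf m (((fun j => (δ j, δ j)), 1) +
          ((fun j => ((0:ZMod 2), (if j = (⟨0,h0⟩ : Fin m) then 1 else 0 : ZMod 2))), 1)) = 1 := by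
        simp only [Qf, Hplus, Qone, Prod.fst_add, Prod.snd_add, Pi.add_apply,
          Prod.mk_add_mk, CharTwo.add_self_eq_zero]
        have expand : ∀ j : Fin m, (δ j + 0) * (δ j + (if j = (⟨0,h0⟩ : Fin m) then 1 else 0 : ZMod 2))
            = δ j + δ j * (if j = (⟨0,h0⟩ : Fin m) then 1 else 0 : ZMod 2) := by
          intro j
          have : δ j * δ j = δ j := by unfold δ; split_ifs <;> simp
          rw [add_zero, mul_add, this]
        simp only [expand]
        rw [Finset.sum_add_distrib, sum_δ m hm]
        have : ∀ j : Fin m, δ j * (if j = (⟨0,h0⟩ : Fin m) then 1 else 0 : ZMod 2)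
            = (if j = (⟨0,h0⟩ : Fin m) then 1 else 0 : ZMod 2) := by
          intro j
          split_ifs with h
          · subst h; unfold δ; simp
          · simp
        simp only [this, Finset.sum_ite_eq', Finset.mem_univ, if_true]
        simp
      rw [this]
      decide

end S7aux
end

/-- For every m ≥ 2, the quadratic form H₊^{⊕m} ⊕ Q₁ on 𝔽₂^{2m+1} is admissible. -/
theorem statement_7 (m : ℕ) (hm : 2 ≤ m) :
    IsAdmissible
      (fun p : (Fin m → ZMod 2 × ZMod 2) × ZMod 2 =>
        (∑ i, Hplus (p.1 i)) + Qone p.2) := by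
  classical
  refine ⟨Fintype.card (S7aux.ι m),
    (S7aux.bas m).reindex (Fintype.equivFin (S7aux.ι m)), ?_, ?_⟩
  · intro i
    rw [Module.Basis.reindex_apply]
    exact S7aux.Qf_bas m hm _
  · intro i
    rw [Module.Basis.reindex_apply]
    obtain ⟨k', hk'⟩ := S7aux.polar_bas m hm ((Fintype.equivFin (S7aux.ι m)).symm i)
    refine ⟨Fintype.equivFin (S7aux.ι m) k', ?_⟩
    rw [Module.Basis.reindex_apply, Equiv.symm_apply_apply]
    exact hk'
end

section
/- Let G be a group generated by a finite set S, and let c ∈ G be a central element with c ≠ 1 and c² = 1. Assume: (i) s² = c for every s ∈ S; (ii) for all s, t ∈ S, either st = ts or sts⁻¹ = t⁻¹; (iii) there exist s, t ∈ S with st ≠ ts. Then G is a finite 2-group, the commutator subgroup [G,G] equals ⟨c⟩, the subgroup generated by {g² : g ∈ G} equals ⟨c⟩, and the Frattini subgroup Φ(G) equals ⟨c⟩; in particular, G is a generalized extraspecial 2-group. -/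
open Subgroup
open scoped commutatorElement

private lemma zpow_eq_of_sq_eq_one {H : Type*} [Group H] {x : H} (hx : x ^ 2 = 1) (k : ℤ) :
    x ^ k = 1 ∨ x ^ k = x := by
  have h2 : x ^ (2 : ℤ) = 1 := by
    rw [show (2 : ℤ) = ((2 : ℕ) : ℤ) from rfl, zpow_natCast, hx]
  rcases Int.even_or_odd k with ⟨m, rfl⟩ | ⟨m, rfl⟩
  · left; rw [← two_mul, zpow_mul, h2, one_zpow]
  · right; rw [zpow_add, zpow_one, zpow_mul, h2, one_zpow, one_mul]

/-- A generalized extraspecial 2-group: a finite 2-group whose Frattini subgroup is central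
and coincides with the commutator subgroup, being cyclic of order 2. -/
def IsGeneralizedExtraspecial (G : Type*) [Group G] : Prop :=
  Finite G ∧ IsPGroup 2 G ∧ frattini G ≤ Subgroup.center G ∧
    frattini G = commutator G ∧ Nat.card (frattini G) = 2

/-- Let `G` be generated by a finite set `S`, with `c` central, `c ≠ 1`, `c² = 1`, such that
every `s ∈ S` squares to `c`, any two elements of `S` either commute or are "anti-conjugate",
and some two elements of `S` do not commute.  Then `G` is a finite 2-group with
`[G,G] = ⟨{g² : g ∈ G}⟩ = Φ(G) = ⟨c⟩`; in particular `G` is generalized extraspecial. -/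
theorem statement_10 {G : Type*} [Group G] (S : Finset G)
    (hgen : Subgroup.closure (S : Set G) = ⊤)
    (c : G) (hc : c ∈ Subgroup.center G) (hc1 : c ≠ 1) (hc2 : c ^ 2 = 1)
    (h1 : ∀ s ∈ S, s ^ 2 = c)
    (h2 : ∀ s ∈ S, ∀ t ∈ S, s * t = t * s ∨ s * t * s⁻¹ = t⁻¹)
    (h3 : ∃ s ∈ S, ∃ t ∈ S, s * t ≠ t * s) :
    Finite G ∧ IsPGroup 2 G ∧
    commutator G = Subgroup.closure {c} ∧
    Subgroup.closure {g : G | ∃ x : G, g = x ^ 2} = Subgroup.closure {c} ∧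
    frattini G = Subgroup.closure {c} ∧
    IsGeneralizedExtraspecial G := by
  obtain ⟨s₀, hs₀, t₀, ht₀, hst₀⟩ := h3
  have hc' : ∀ g : G, g * c = c * g := Subgroup.mem_center_iff.mp hc
  set N : Subgroup G := Subgroup.closure {c} with hNdef
  have hNz : N = zpowers c := (zpowers_eq_closure c).symm
  have hcN : c ∈ N := subset_closure rfl
  have hmemN : ∀ {n : G}, n ∈ N → n = 1 ∨ n = c := by
    intro n hn
    rw [hNz] at hn
    obtain ⟨k, rfl⟩ := mem_zpowers_iff.mp hn
    exact zpow_eq_of_sq_eq_one hc2 k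
  have hNcentral : ∀ {n : G}, n ∈ N → ∀ g : G, n * g = g * n := by
    intro n hn g
    rcases hmemN hn with rfl | rfl
    · rw [one_mul, mul_one]
    · exact (hc' g).symm
  have hNle : N ≤ Subgroup.center G := fun n hn =>
    Subgroup.mem_center_iff.mpr fun g => (hNcentral hn g).symm
  haveI hNnormal : N.Normal := ⟨fun n hn g => by
    have h := hNcentral hn g
    rw [← h, mul_assoc, mul_inv_cancel, mul_one]
    exact hn⟩
  haveI : Fact (Nat.Prime 2) := ⟨Nat.prime_two⟩
  have horderc : orderOf c = 2 := orderOf_eq_prime hc2 hc1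
  have hcinv : c⁻¹ = c := inv_eq_of_mul_eq_one_right (by rw [← pow_two, hc2])
  -- commutator of anti-commuting generators equals `c`
  have hanti : ∀ t ∈ S, ∀ s : G, s * t * s⁻¹ = t⁻¹ → ⁅s, t⁆ = c := by
    intro t ht s hs
    rw [commutatorElement_def, hs, ← mul_inv_rev, ← pow_two, h1 t ht, hcinv]
  have hc_eq : ⁅s₀, t₀⁆ = c := by
    rcases h2 s₀ hs₀ t₀ ht₀ with h | h
    · exact absurd h hst₀
    · exact hanti t₀ ht₀ s₀ h
  have hcomm_gen : ∀ s ∈ S, ∀ t ∈ S, ⁅s, t⁆ ∈ N := by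
    intro s hs t ht
    rcases h2 s hs t ht with h | h
    · rw [commutatorElement_eq_one_iff_commute.mpr h]; exact one_mem N
    · rw [hanti t ht s h]; exact hcN
  -- the quotient by N
  set π : G →* G ⧸ N := QuotientGroup.mk' N with hπ
  have hπsurj : Function.Surjective π := QuotientGroup.mk'_surjective N
  have hker : ∀ {g : G}, π g = 1 ↔ g ∈ N := by
    intro g
    rw [← MonoidHom.mem_ker, QuotientGroup.ker_mk']
  have hgenQ : Subgroup.closure (π '' (S : Set G)) = ⊤ := by
    rw [← MonoidHom.map_closure, hgen, Subgroup.map_top_of_surjective π hπsurj]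
  have hQcomm : ∀ a b : G ⧸ N, a * b = b * a := by
    intro a b
    have ha : a ∈ Subgroup.closure (π '' (S : Set G)) := hgenQ ▸ Subgroup.mem_top a
    have hb : b ∈ Subgroup.closure (π '' (S : Set G)) := hgenQ ▸ Subgroup.mem_top b
    refine Subgroup.closure_induction₂ (p := fun x y _ _ => x * y = y * x)
      ?_ (by simp) (by simp) ?_ ?_ ?_ ?_ ha hb
    · rintro _ _ ⟨s, hs, rfl⟩ ⟨t, ht, rfl⟩
      have hm : s * t * (t * s)⁻¹ ∈ N := by
        have h := hcomm_gen s hs t ht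
        rw [commutatorElement_def] at h
        rw [mul_inv_rev, ← mul_assoc]
        exact h
      have : π (s * t) * (π (t * s))⁻¹ = 1 := by
        rw [← map_inv, ← map_mul]
        exact hker.mpr hm
      have h' := mul_inv_eq_one.mp this
      rw [map_mul, map_mul] at h'
      exact h'
    · intro x y z _ _ _ hxz hyz
      rw [mul_assoc, hyz, ← mul_assoc, hxz, mul_assoc]
    · intro y z x _ _ _ hxy hxz
      rw [← mul_assoc, hxy, mul_assoc, hxz, ← mul_assoc]
    · intro x y _ _ h
      exact (Commute.inv_left h : _)
    · intro x y _ _ h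
      exact (Commute.inv_right h : _)
  letI : CommGroup (G ⧸ N) := { (inferInstance : Group (G ⧸ N)) with mul_comm := hQcomm }
  have hQsq : ∀ a : G ⧸ N, a ^ 2 = 1 := by
    intro a
    have ha : a ∈ Subgroup.closure (π '' (S : Set G)) := hgenQ ▸ Subgroup.mem_top a
    induction ha using Subgroup.closure_induction with
    | mem x hx =>
      obtain ⟨s, hs, rfl⟩ := hx
      rw [← map_pow, h1 s hs]
      exact hker.mpr hcN
    | one => rw [one_pow]
    | mul x y _ _ hx hy => rw [mul_pow, hx, hy, one_mul]
    | inv x _ hx => rw [inv_pow, hx, inv_one]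
  -- finiteness
  haveI : Group.FG G := Group.fg_iff.mpr ⟨S, hgen, S.finite_toSet⟩
  haveI : Group.FG (G ⧸ N) := Group.fg_of_surjective hπsurj
  haveI hfinQ : Finite (G ⧸ N) :=
    CommGroup.finite_of_fg_torsion _ fun a =>
      isOfFinOrder_iff_pow_eq_one.mpr ⟨2, two_pos, hQsq a⟩
  haveI hfinN : Finite N := by
    apply Nat.finite_of_card_ne_zero
    rw [hNz, Nat.card_zpowers, horderc]
    exact two_ne_zero
  haveI hfinG : Finite G := Finite.of_equiv _ (groupEquivQuotientProdSubgroup (s := N)).symm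
  -- squares lie in N
  have hsqN : ∀ g : G, g ^ 2 ∈ N := fun g => hker.mp (by rw [map_pow]; exact hQsq (π g))
  -- 2-group
  have hp : IsPGroup 2 G := by
    intro g
    refine ⟨2, ?_⟩
    rw [show (2 : ℕ) ^ 2 = 2 * 2 from rfl, pow_mul]
    rcases hmemN (hsqN g) with h | h
    · rw [h, one_pow]
    · rw [h, hc2]
  -- commutators lie in N
  have hcommN : commutator G = N := by
    apply le_antisymm
    · rw [commutator_def, Subgroup.commutator_le]
      intro g _ h _
      apply hker.mp
      rw [map_commutatorElement]
      exact commutatorElement_eq_one_iff_commute.mpr (hQcomm (π g) (π h))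
    · rw [hNdef, Subgroup.closure_le, Set.singleton_subset_iff]
      rw [SetLike.mem_coe, ← hc_eq, commutator_def]
      exact Subgroup.commutator_mem_commutator (Subgroup.mem_top s₀) (Subgroup.mem_top t₀)
  -- squares closure
  have hsqC : Subgroup.closure {g : G | ∃ x : G, g = x ^ 2} = N := by
    apply le_antisymm
    · rw [Subgroup.closure_le]
      rintro g ⟨x, rfl⟩
      exact hsqN x
    · rw [hNdef]
      apply Subgroup.closure_mono
      rintro g rfl
      exact ⟨s₀, (h1 s₀ hs₀).symm⟩
  -- N is contained in the Frattini subgroup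
  have hNfrat : N ≤ frattini G := by
    rw [frattini, Order.radical]
    refine le_iInf₂ fun M hM => ?_
    rw [hNz, Subgroup.zpowers_le]
    by_contra hcM
    have htop : M ⊔ N = ⊤ := by
      refine hM.2 _ (lt_of_le_of_ne le_sup_left fun h => hcM ?_)
      rw [h]
      exact Subgroup.mem_sup_right hcN
    have hdecomp : ∀ g : G, ∃ m ∈ M, ∃ n ∈ N, m * n = g := by
      intro g
      have hg : g ∈ M ⊔ N := htop ▸ Subgroup.mem_top g
      rw [← SetLike.mem_coe, Subgroup.mul_normal] at hg
      exact Set.mem_mul.mp hg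
    haveI hMnormal : M.Normal := by
      constructor
      intro n hn g
      obtain ⟨m, hm, z, hz, rfl⟩ := hdecomp g
      have h1 : m * z * n * (m * z)⁻¹ = m * (z * n * z⁻¹) * m⁻¹ := by group
      have h2 : z * n * z⁻¹ = n := by
        rw [hNcentral hz n, mul_assoc, mul_inv_cancel, mul_one]
      rw [h1, h2]
      exact M.mul_mem (M.mul_mem hm hn) (M.inv_mem hm)
    set ρ : G →* G ⧸ M := QuotientGroup.mk' M with hρ
    have hρker : ∀ {g : G}, ρ g = 1 ↔ g ∈ M := by
      intro g
      rw [← MonoidHom.mem_ker, QuotientGroup.ker_mk']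
    have hpow : ∀ g : G, ∃ k : ℤ, ρ g = (ρ c) ^ k := by
      intro g
      obtain ⟨m, hm, z, hz, rfl⟩ := hdecomp g
      rw [hNz] at hz
      obtain ⟨k, rfl⟩ := mem_zpowers_iff.mp hz
      refine ⟨k, ?_⟩
      rw [map_mul, hρker.mpr hm, one_mul, map_zpow]
    have hcM' : c ∈ M := by
      rw [← hc_eq]
      apply hρker.mp
      rw [map_commutatorElement]
      obtain ⟨k, hk⟩ := hpow s₀
      obtain ⟨l, hl⟩ := hpow t₀
      rw [hk, hl]
      exact commutatorElement_eq_one_iff_commute.mpr (Commute.zpow_zpow (Commute.refl _) k l)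
    exact hcM hcM'
  -- the Frattini subgroup is contained in N
  have hfratN : frattini G ≤ N := by
    intro g hg
    by_contra hgN
    have hq1 : π g ≠ 1 := fun h => hgN (hker.mp h)
    haveI : Finite (Subgroup (G ⧸ N)) := Finite.of_injective _ SetLike.coe_injective
    obtain ⟨M, hqM, hmax⟩ :=
      Set.Finite.exists_maximalFor id {H : Subgroup (G ⧸ N) | π g ∉ H} (Set.toFinite _)
        ⟨⊥, fun h => hq1 (Subgroup.mem_bot.mp h)⟩
    simp only [id, Set.mem_setOf_eq] at hqM hmax
    have habs : ∀ x : G ⧸ N, x ∉ M → π g ∈ M ⊔ zpowers x := by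
      intro x hx
      by_contra hq
      exact hx (hmax hq le_sup_left (Subgroup.mem_sup_right (Subgroup.mem_zpowers x)))
    have hMq : M ⊔ zpowers (π g) = ⊤ := by
      rw [eq_top_iff']
      intro x
      by_cases hx : x ∈ M
      · exact Subgroup.mem_sup_left hx
      · have hq := habs x hx
        rw [← SetLike.mem_coe, Subgroup.mul_normal] at hq
        obtain ⟨m, hm, z, hz, heq⟩ := hq
        obtain ⟨k, rfl⟩ := mem_zpowers_iff.mp hz
        have heq' : m * x ^ k = π g := heq
        rcases zpow_eq_of_sq_eq_one (hQsq x) k with h | h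
        · rw [h, mul_one] at heq'
          exact absurd (heq' ▸ hm) hqM
        · rw [h] at heq'
          have : x = m⁻¹ * π g := by rw [← heq', ← mul_assoc, inv_mul_cancel, one_mul]
          rw [this]
          exact Subgroup.mul_mem _ (Subgroup.mem_sup_left (M.inv_mem hm))
            (Subgroup.mem_sup_right (Subgroup.mem_zpowers (π g)))
    have hcoatom : IsCoatom M := by
      constructor
      · exact fun h => hqM (h ▸ Subgroup.mem_top (π g))
      · intro K hK
        have hqK : π g ∈ K := by
          by_contra h
          exact hK.ne (le_antisymm hK.le (hmax h hK.le))
        have : M ⊔ zpowers (π g) ≤ K := sup_le hK.le (Subgroup.zpowers_le.mpr hqK)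
        rw [hMq] at this
        exact top_unique this
    set M' := Subgroup.comap π M with hM'
    have hNM' : N ≤ M' := fun n hn => by
      rw [hM', Subgroup.mem_comap, hker.mpr hn]
      exact M.one_mem
    have hcoatom' : IsCoatom M' := by
      constructor
      · intro h
        have hg' : g ∈ M' := by rw [h]; exact Subgroup.mem_top g
        exact hqM (Subgroup.mem_comap.mp hg')
      · intro K hK
        have hNK : (QuotientGroup.mk' N).ker ≤ K := by
          rw [QuotientGroup.ker_mk']
          exact hNM'.trans hK.le
        have hmm : Subgroup.map π M' = M := map_comap_eq_self_of_surjective hπsurj M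
        have hlt : M < Subgroup.map π K := by
          refine lt_of_le_of_ne (hmm ▸ Subgroup.map_mono hK.le) fun h => ?_
          have : K = M' := by
            rw [hM', h, comap_map_eq_self hNK]
          exact hK.ne' this
        have htK : Subgroup.map π K = ⊤ := hcoatom.2 _ hlt
        have : K = Subgroup.comap π (Subgroup.map π K) := (comap_map_eq_self hNK).symm
        rw [this, htK, Subgroup.comap_top]
    exact hqM (Subgroup.mem_comap.mp (frattini_le_coatom hcoatom' hg))
  have hfrat : frattini G = N := le_antisymm hfratN hNfrat
  have hcard : Nat.card (frattini G) = 2 := by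
    rw [hfrat, hNz, Nat.card_zpowers, horderc]
  exact ⟨hfinG, hp, hcommN, hsqC, hfrat,
    hfinG, hp, hfrat ▸ hNle, hfrat.trans hcommN.symm, hcard⟩
end

section
/- For every n ≥ 1, the group E(n) is isomorphic to the group G_{0,n−1} presented by generators ε, x₁, …, x_{n−1} and relations ε² = 1, xᵢ² = ε for all i, xᵢxⱼ = ε xⱼxᵢ for all i ≠ j, and εxᵢ = xᵢε for all i. -/
open CliffordAlgebra

/-- The negative definite quadratic form `x ↦ −(x₁² + ⋯ + xₙ²)` on `ℝⁿ`. -/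
noncomputable def negQ (n : ℕ) : QuadraticForm ℝ (Fin n → ℝ) :=
  QuadraticMap.weightedSumSquares ℝ (fun _ : Fin n => (-1 : ℝ))

/-- The standard generators `e₁, …, eₙ` of the Clifford algebra `Cl(0,n)`. -/
noncomputable def cliffGen (n : ℕ) (i : Fin n) : CliffordAlgebra (negQ n) :=
  CliffordAlgebra.ι (negQ n) (Pi.single i 1)

/-- `E(n)`: the subgroup of the units of `Cl(0,n)` generated by `−1` together with the
products `eᵢeⱼ` for `i ≠ j` (equivalently, signed products of evenly many `eᵢ`'s). -/
noncomputable def En (n : ℕ) : Subgroup (CliffordAlgebra (negQ n))ˣ :=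
  Subgroup.closure
    {u : (CliffordAlgebra (negQ n))ˣ |
      (↑u : CliffordAlgebra (negQ n)) = -1 ∨
      ∃ i j : Fin n, i ≠ j ∧ (↑u : CliffordAlgebra (negQ n)) = cliffGen n i * cliffGen n j}

/-- The relators of the presentation `G_{0,n−1}`: generators `ε` (encoded as `none`) and
`x₁, …, x_{n−1}` (encoded as `some i`), with relations `ε² = 1`, `xᵢ² = ε`,
`xᵢxⱼ = ε xⱼxᵢ` for `i ≠ j`, and `ε xᵢ = xᵢ ε`. -/
def GRels (n : ℕ) : Set (FreeGroup (Option (Fin (n - 1)))) :=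
  {w | w = FreeGroup.of none ^ 2 ∨
    (∃ i, w = FreeGroup.of (some i) ^ 2 * (FreeGroup.of none)⁻¹) ∨
    (∃ i j, i ≠ j ∧
      w = FreeGroup.of (some i) * FreeGroup.of (some j) *
        (FreeGroup.of none * FreeGroup.of (some j) * FreeGroup.of (some i))⁻¹) ∨
    (∃ i, w = FreeGroup.of none * FreeGroup.of (some i) *
        (FreeGroup.of (some i) * FreeGroup.of none)⁻¹)}



lemma negQ_single (n : ℕ) (i : Fin n) : negQ n (Pi.single i 1) = -1 := by
  simp [negQ, Pi.single_apply]

lemma negQ_ortho (n : ℕ) {i j : Fin n} (h : i ≠ j) :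
    (negQ n).IsOrtho (Pi.single i 1) (Pi.single j 1) := by
  simp only [QuadraticMap.IsOrtho, negQ, QuadraticMap.weightedSumSquares_apply]
  rw [← Finset.sum_add_distrib]
  refine Finset.sum_congr rfl fun k _ => ?_
  rcases eq_or_ne k i with rfl | hi <;> rcases eq_or_ne k j with rfl | hj <;>
    simp_all [Pi.single_apply] <;> ring

lemma ee_sq (n : ℕ) (i : Fin n) : cliffGen n i * cliffGen n i = -1 := by
  rw [cliffGen, ι_sq_scalar, negQ_single]; simp

lemma ee_anti (n : ℕ) {i j : Fin n} (h : i ≠ j) :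
    cliffGen n i * cliffGen n j = -(cliffGen n j * cliffGen n i) :=
  ι_mul_ι_comm_of_isOrtho (negQ_ortho n h)

lemma one_ne_neg_one (n : ℕ) : (1 : CliffordAlgebra (negQ n)) ≠ -1 := by
  intro h
  have h2 : (2 : ℝ) • (1 : CliffordAlgebra (negQ n)) = 0 := by
    rw [two_smul]; nth_rewrite 2 [h]; simp
  have := congrArg (equivExterior (negQ n)) h2
  rw [map_smul, map_zero, smul_eq_zero] at this
  rcases this with h' | h'
  · norm_num at h'
  · exact one_ne_zero ((equivExterior (negQ n)).injective (by rw [h', map_zero]))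


-- product of e i * e j is a unit when i ≠ j
lemma uGen_aux (n : ℕ) {i j : Fin n} (h : i ≠ j) :
    (cliffGen n i * cliffGen n j) * -(cliffGen n i * cliffGen n j) = 1 := by
  have : cliffGen n i * cliffGen n j * (cliffGen n i * cliffGen n j) = -1 := by
    rw [show cliffGen n i * cliffGen n j * (cliffGen n i * cliffGen n j)
        = cliffGen n i * (cliffGen n j * cliffGen n i) * cliffGen n j by noncomm_ring,
      ee_anti n h.symm]
    rw [show cliffGen n i * -(cliffGen n i * cliffGen n j) * cliffGen n j
        = -(cliffGen n i * cliffGen n i * (cliffGen n j * cliffGen n j)) by noncomm_ring,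
      ee_sq, ee_sq]
    noncomm_ring
  rw [mul_neg, this, neg_neg]

noncomputable def uGen' (n : ℕ) {i j : Fin n} (h : i ≠ j) : (CliffordAlgebra (negQ n))ˣ :=
  ⟨cliffGen n i * cliffGen n j, -(cliffGen n i * cliffGen n j), uGen_aux n h, by
    have h1 := uGen_aux n h
    rw [show -(cliffGen n i * cliffGen n j) * (cliffGen n i * cliffGen n j)
      = cliffGen n i * cliffGen n j * -(cliffGen n i * cliffGen n j) * -1 * -1 by noncomm_ring,
      h1]; noncomm_ring⟩

@[simp] lemma uGen'_val (n : ℕ) {i j : Fin n} (h : i ≠ j) :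
    (uGen' n h : CliffordAlgebra (negQ n)) = cliffGen n i * cliffGen n j := rfl

-- key val computation: (e0 ei)(e0 ej) = ei ej  for i,j ≠ 0
lemma val_mul (n : ℕ) {i j : Fin n} {z : Fin n} (hi : z ≠ i) (hj : z ≠ j) :
    (cliffGen n z * cliffGen n i) * (cliffGen n z * cliffGen n j)
      = cliffGen n i * cliffGen n j := by
  rw [show (cliffGen n z * cliffGen n i) * (cliffGen n z * cliffGen n j)
      = cliffGen n z * (cliffGen n i * cliffGen n z) * cliffGen n j by noncomm_ring,
    ee_anti n hi.symm,
    show cliffGen n z * -(cliffGen n z * cliffGen n i) * cliffGen n j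
      = -(cliffGen n z * cliffGen n z * (cliffGen n i * cliffGen n j)) by noncomm_ring,
    ee_sq]
  noncomm_ring


noncomputable def fU (m : ℕ) : Option (Fin m) → (CliffordAlgebra (negQ (m+1)))ˣ
  | none => -1
  | some i => uGen' (m+1) (Fin.succ_ne_zero i).symm

lemma fU_rels (m : ℕ) : ∀ r ∈ GRels (m+1), FreeGroup.lift (fU m) r = 1 := by
  rintro r (rfl | ⟨i, rfl⟩ | ⟨i, j, hij, rfl⟩ | ⟨i, rfl⟩)
  · simp only [map_mul, map_pow, map_inv, FreeGroup.lift_apply_of, mul_inv_eq_one]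
    ext
    simp only [fU, Units.val_mul, Units.val_pow_eq_pow_val, Units.val_neg, Units.val_one, sq]
    norm_num
  · simp only [map_mul, map_pow, map_inv, FreeGroup.lift_apply_of, mul_inv_eq_one]
    ext
    simp only [fU, Units.val_mul, Units.val_pow_eq_pow_val, Units.val_neg, Units.val_one,
      uGen'_val, sq]
    rw [show cliffGen (m+1) 0 * cliffGen (m+1) i.succ *
          (cliffGen (m+1) 0 * cliffGen (m+1) i.succ)
        = (cliffGen (m+1) 0 * cliffGen (m+1) i.succ) *
          (cliffGen (m+1) 0 * cliffGen (m+1) i.succ) by noncomm_ring,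
      val_mul (m+1) (Fin.succ_ne_zero i).symm (Fin.succ_ne_zero i).symm, ee_sq]
  · simp only [map_mul, map_pow, map_inv, FreeGroup.lift_apply_of, mul_inv_eq_one]
    ext
    simp only [fU, Units.val_mul, Units.val_pow_eq_pow_val, Units.val_neg, Units.val_one,
      uGen'_val, sq]
    have hij' : Fin.succ i ≠ Fin.succ j := fun h => hij (Fin.succ_injective _ h)
    rw [val_mul (m+1) (Fin.succ_ne_zero i).symm (Fin.succ_ne_zero j).symm,
      show (-1 : CliffordAlgebra (negQ (m+1))) * (cliffGen (m+1) 0 * cliffGen (m+1) j.succ) *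
          (cliffGen (m+1) 0 * cliffGen (m+1) i.succ)
        = -((cliffGen (m+1) 0 * cliffGen (m+1) j.succ) *
          (cliffGen (m+1) 0 * cliffGen (m+1) i.succ)) by noncomm_ring,
      val_mul (m+1) (Fin.succ_ne_zero j).symm (Fin.succ_ne_zero i).symm,
      ← ee_anti (m+1) hij']
  · simp only [map_mul, map_pow, map_inv, FreeGroup.lift_apply_of, mul_inv_eq_one]
    ext
    simp only [fU, Units.val_mul, Units.val_pow_eq_pow_val, Units.val_neg, Units.val_one,
      uGen'_val, sq]
    noncomm_ring

noncomputable def psi (m : ℕ) :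
    PresentedGroup (GRels (m+1)) →* (CliffordAlgebra (negQ (m+1)))ˣ :=
  PresentedGroup.toGroup (fU_rels m)


namespace St17
variable {m : ℕ}

abbrev Gp (m : ℕ) := PresentedGroup (GRels (m+1))

def eps (m : ℕ) : Gp m := PresentedGroup.of none
def xg (i : Fin m) : Gp m := PresentedGroup.of (some i)

lemma rel_one {r : FreeGroup (Option (Fin m))} (hr : r ∈ GRels (m+1)) :
    PresentedGroup.mk (GRels (m+1)) r = 1 :=
  (QuotientGroup.eq_one_iff _).mpr (Subgroup.subset_normalClosure hr)

lemma heps2 : eps m * eps m = 1 := by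
  have := rel_one (m := m) (Or.inl rfl)
  rw [map_pow, sq] at this
  exact this

lemma hx2 (i : Fin m) : xg i * xg i = eps m := by
  have := rel_one (m := m) (Or.inr (Or.inl ⟨i, rfl⟩))
  rw [map_mul, map_pow, map_inv, mul_inv_eq_one, sq] at this
  exact this

lemma hswap {i j : Fin m} (hij : i ≠ j) : xg i * xg j = eps m * xg j * xg i := by
  have := rel_one (m := m) (Or.inr (Or.inr (Or.inl ⟨i, j, hij, rfl⟩)))
  simp only [map_mul, map_inv, mul_inv_eq_one] at this
  exact this

lemma hcen (i : Fin m) : eps m * xg i = xg i * eps m := by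
  have := rel_one (m := m) (Or.inr (Or.inr (Or.inr ⟨i, rfl⟩)))
  rw [map_mul, map_mul, map_inv, mul_inv_eq_one] at this
  exact this

lemma hcentral (g : Gp m) : eps m * g = g * eps m := by
  have hg : g ∈ Subgroup.centralizer {eps m} := by
    refine PresentedGroup.generated_by _ _ (fun j => ?_) g
    refine Subgroup.mem_centralizer_iff.mpr ?_
    rintro h rfl
    rcases j with _ | i
    · rfl
    · exact hcen i
  exact Subgroup.mem_centralizer_iff.mp hg _ rfl

lemma hcentralpow (a : ℕ) (g : Gp m) : eps m ^ a * g = g * eps m ^ a := by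
  induction a with
  | zero => simp
  | succ k ih => rw [pow_succ, mul_assoc, hcentral g, ← mul_assoc, ih, mul_assoc]

def word (l : List (Fin m)) : Gp m := (l.map xg).prod

def pword (v : Fin m → ZMod 2) (l : List (Fin m)) : Gp m :=
  (l.map (fun i => if v i = 1 then xg i else 1)).prod

def nf (v : Fin m → ZMod 2) : Gp m := pword v (List.finRange m)

lemma word_nil : word (m := m) [] = 1 := rfl
lemma word_cons (j : Fin m) (l : List (Fin m)) : word (j :: l) = xg j * word l := by
  simp [word]
lemma word_append (l l' : List (Fin m)) : word (l ++ l') = word l * word l' := by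
  simp [word]

lemma pword_nil (v : Fin m → ZMod 2) : pword v [] = 1 := rfl
lemma pword_cons (v : Fin m → ZMod 2) (i : Fin m) (l : List (Fin m)) :
    pword v (i :: l) = (if v i = 1 then xg i else 1) * pword v l := by
  simp [pword]

lemma pword_congr {v w : Fin m → ZMod 2} {l : List (Fin m)} (h : ∀ i ∈ l, v i = w i) :
    pword v l = pword w l := by
  induction l with
  | nil => rfl
  | cons i t ih =>
    rw [pword_cons, pword_cons, h i List.mem_cons_self, ih (fun k hk => h k (.tail _ hk))]

lemma zmod2_cases (a : ZMod 2) : a = 0 ∨ a = 1 := by revert a; decide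

lemma xinv (j : Fin m) : (xg j)⁻¹ = eps m * xg j := by
  refine inv_eq_of_mul_eq_one_right ?_
  rw [← mul_assoc, ← hcen, mul_assoc, hx2, heps2]

lemma epsinv : (eps m)⁻¹ = eps m := inv_eq_of_mul_eq_one_right heps2

lemma ins (l : List (Fin m)) (hl : l.Nodup) (j : Fin m) (hj : j ∈ l) (v : Fin m → ZMod 2) :
    ∃ a : ℕ, xg j * pword v l = eps m ^ a * pword (v + Pi.single j 1) l := by
  induction l with
  | nil => simp at hj
  | cons i t ih =>
    rw [List.nodup_cons] at hl
    rcases List.mem_cons.mp hj with rfl | hjt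
    · -- j = i, j ∉ t
      have ht : pword (v + Pi.single j 1) t = pword v t :=
        pword_congr (fun k hk => by
          have : k ≠ j := fun h => hl.1 (h ▸ hk)
          simp [Pi.single_apply, this])
      rcases zmod2_cases (v j) with h0 | h1
      · refine ⟨0, ?_⟩
        rw [pword_cons, pword_cons, ht, h0, if_neg (by norm_num),
          if_pos (by simp [h0]), pow_zero, one_mul, one_mul]
      · refine ⟨1, ?_⟩
        rw [pword_cons, pword_cons, ht, h1, if_pos rfl,
          if_neg (by simp [h1]), pow_one, one_mul, ← mul_assoc, hx2]
    · -- j ∈ t, j ≠ i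
      have hji : j ≠ i := fun h => hl.1 (h ▸ hjt)
      obtain ⟨a, ha⟩ := ih hl.2 hjt
      have hsame : (v + Pi.single j 1 : Fin m → ZMod 2) i = v i := by simp [Pi.single_apply, hji.symm]
      rcases zmod2_cases (v i) with h0 | h1
      · refine ⟨a, ?_⟩
        rw [pword_cons, pword_cons, hsame, h0, if_neg (by norm_num), one_mul, one_mul, ha]
      · refine ⟨a + 1, ?_⟩
        rw [pword_cons, pword_cons, hsame, h1, if_pos rfl, ← mul_assoc, hswap hji,
          mul_assoc, ha, pow_add, pow_one]
        rw [show eps m ^ a * eps m = eps m * eps m ^ a from hcentralpow a (eps m),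
          mul_assoc (eps m) (xg i), ← mul_assoc (xg i), ← hcentralpow a (xg i),
          mul_assoc (eps m ^ a), mul_assoc (eps m)]

lemma word_mul_nf (L : List (Fin m)) (v : Fin m → ZMod 2) :
    ∃ (a : ℕ) (w : Fin m → ZMod 2), word L * nf v = eps m ^ a * nf w := by
  induction L with
  | nil => exact ⟨0, v, by rw [word_nil, one_mul, pow_zero, one_mul]⟩
  | cons j L ih =>
    obtain ⟨a, w, hw⟩ := ih
    obtain ⟨b, hb⟩ := ins (List.finRange m) (List.nodup_finRange m) j (List.mem_finRange j) w
    refine ⟨a + b, w + Pi.single j 1, ?_⟩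
    rw [word_cons, mul_assoc, hw, ← mul_assoc, ← hcentralpow a (xg j), mul_assoc]
    rw [show xg j * nf w = eps m ^ b * nf (w + Pi.single j 1) from hb]
    rw [← mul_assoc, ← pow_add]

lemma word_inv (L : List (Fin m)) :
    (word L)⁻¹ = eps m ^ L.length * word L.reverse := by
  induction L with
  | nil => simp [word_nil]
  | cons j L ih =>
    rw [word_cons, mul_inv_rev, ih, xinv, List.reverse_cons, word_append,
      List.length_cons]
    rw [mul_assoc, show word L.reverse * (eps m * xg j) = eps m * (word L.reverse * xg j) by
      rw [← mul_assoc, ← hcentral, mul_assoc]]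
    rw [← mul_assoc, show eps m ^ L.length * eps m = eps m ^ (L.length + 1) by
      rw [pow_succ]]
    rw [word_cons, word_nil, mul_one]

lemma exists_word (g : Gp m) : ∃ (c : ℕ) (L : List (Fin m)), g = eps m ^ c * word L := by
  let S : Subgroup (Gp m) :=
    { carrier := {g | ∃ (c : ℕ) (L : List (Fin m)), g = eps m ^ c * word L}
      one_mem' := ⟨0, [], by simp [word_nil]⟩
      mul_mem' := by
        rintro a b ⟨c, L, rfl⟩ ⟨d, L', rfl⟩
        refine ⟨c + d, L ++ L', ?_⟩
        rw [word_append, mul_assoc, ← mul_assoc (word L), ← hcentralpow d (word L),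
          ← mul_assoc, ← mul_assoc, ← pow_add, mul_assoc]
      inv_mem' := by
        rintro a ⟨c, L, rfl⟩
        refine ⟨L.length + c, L.reverse, ?_⟩
        rw [mul_inv_rev, word_inv, ← inv_pow, epsinv, mul_assoc,
          ← hcentralpow c (word L.reverse), ← mul_assoc, ← pow_add] }
  have : g ∈ S := by
    refine PresentedGroup.generated_by _ _ (fun j => ?_) g
    rcases j with _ | i
    · exact ⟨1, [], by rw [pow_one, word_nil, mul_one]; rfl⟩
    · exact ⟨0, [i], by rw [pow_zero, one_mul, word_cons, word_nil, mul_one]; rfl⟩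
  exact this

lemma nf_zero : nf (m := m) 0 = 1 := by
  rw [nf]
  have : ∀ l : List (Fin m), pword 0 l = 1 := by
    intro l
    induction l with
    | nil => rfl
    | cons i t ih => rw [pword_cons, ih, if_neg (by norm_num), one_mul]
  exact this _

lemma normal_form (g : Gp m) : ∃ (a : ℕ) (v : Fin m → ZMod 2), g = eps m ^ a * nf v := by
  obtain ⟨c, L, rfl⟩ := exists_word g
  obtain ⟨a, w, hw⟩ := word_mul_nf L 0
  rw [nf_zero, mul_one] at hw
  exact ⟨c + a, w, by rw [hw, ← mul_assoc, ← pow_add]⟩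



noncomputable def negAt (n : ℕ) (t : Fin n) : (Fin n → ℝ) →ₗ[ℝ] (Fin n → ℝ) :=
  LinearMap.pi (fun j => if j = t then -(LinearMap.proj j) else LinearMap.proj j)

lemma negAt_apply (n : ℕ) (t : Fin n) (x : Fin n → ℝ) (j : Fin n) :
    negAt n t x j = if j = t then -(x j) else x j := by
  rw [negAt, LinearMap.pi_apply]
  split_ifs with h <;> simp [h]

noncomputable def isoNeg (n : ℕ) (t : Fin n) : negQ n →qᵢ negQ n where
  toLinearMap := negAt n t
  map_app' := by
    intro x
    simp only [negQ, QuadraticMap.weightedSumSquares_apply]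
    refine Finset.sum_congr rfl fun j _ => ?_
    show (-1 : ℝ) • (negAt n t x j * negAt n t x j) = -1 • (x j * x j)
    rw [negAt_apply]
    split_ifs <;> ring_nf

noncomputable def sigma (n : ℕ) (t : Fin n) :
    CliffordAlgebra (negQ n) →ₐ[ℝ] CliffordAlgebra (negQ n) :=
  CliffordAlgebra.map (isoNeg n t)

lemma sigma_gen (n : ℕ) (t j : Fin n) :
    sigma n t (cliffGen n j) = if j = t then -(cliffGen n j) else cliffGen n j := by
  rw [sigma, cliffGen, CliffordAlgebra.map_apply_ι]
  have : (isoNeg n t) (Pi.single j 1) =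
      if j = t then -(Pi.single j 1 : Fin n → ℝ) else Pi.single j 1 := by
    have : (isoNeg n t) (Pi.single j 1) = negAt n t (Pi.single j 1) := rfl
    rw [this]
    funext k
    rw [negAt_apply]
    rcases eq_or_ne k j with rfl | hkj
    · split_ifs <;> simp_all [Pi.single_apply]
    · simp [Pi.single_apply, hkj]
      split_ifs <;> simp [Pi.single_apply, hkj]
  rw [this]
  split_ifs <;> simp [cliffGen]

noncomputable def sigmaU (n : ℕ) (t : Fin n) :
    (CliffordAlgebra (negQ n))ˣ →* (CliffordAlgebra (negQ n))ˣ :=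
  Units.map (sigma n t).toRingHom.toMonoidHom

lemma sigmaU_val (n : ℕ) (t : Fin n) (u : (CliffordAlgebra (negQ n))ˣ) :
    (sigmaU n t u : CliffordAlgebra (negQ n)) = sigma n t u := rfl

lemma sigmaU_neg_one (n : ℕ) (t : Fin n) : sigmaU n t (-1) = -1 := by
  ext; rw [sigmaU_val]; simp


-- ### glue: psi on generators, injectivity, surjectivity

variable {m : ℕ}

noncomputable def uu (i : Fin m) : (CliffordAlgebra (negQ (m+1)))ˣ :=
  uGen' (m+1) (Fin.succ_ne_zero i).symm

lemma psi_eps : psi m (eps m) = -1 := by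
  rw [eps, psi, PresentedGroup.toGroup.of]; rfl

lemma psi_x (i : Fin m) : psi m (xg i) = uu i := by
  rw [xg, psi, PresentedGroup.toGroup.of]; rfl

lemma psi_pword (v : Fin m → ZMod 2) (l : List (Fin m)) :
    psi m (pword v l) = (l.map (fun i => if v i = 1 then uu i else 1)).prod := by
  induction l with
  | nil => simp [pword_nil]
  | cons i t ih =>
    rw [pword_cons, map_mul, ih, List.map_cons, List.prod_cons, apply_ite (psi m),
      map_one, psi_x]

lemma negone_pow_comm (a : ℕ) (w : (CliffordAlgebra (negQ (m+1)))ˣ) :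
    w * (-1) ^ a = (-1) ^ a * w :=
  (((Commute.neg_one_left w).pow_left a).eq).symm

lemma uu_val (i : Fin m) :
    ((uu i : _) : CliffordAlgebra (negQ (m+1))) = cliffGen (m+1) 0 * cliffGen (m+1) i.succ :=
  uGen'_val (m+1) _

lemma mul_neg_one_pow_mul (c : ℕ) (w P : (CliffordAlgebra (negQ (m+1)))ˣ) :
    w * ((-1) ^ c * P) = (-1) ^ c * (w * P) := by
  rcases Nat.even_or_odd c with h | h
  · rw [h.neg_one_pow, one_mul, one_mul]
  · rw [h.neg_one_pow, neg_one_mul, neg_one_mul, mul_neg]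

lemma sigmaU_uu (k i : Fin m) :
    sigmaU (m+1) k.succ (uu i) = if i = k then -(uu i) else uu i := by
  rcases eq_or_ne i k with rfl | hik
  · ext
    rw [if_pos rfl, sigmaU_val, uu_val, map_mul, sigma_gen, sigma_gen,
      if_neg (show (0 : Fin (m+1)) ≠ i.succ from (Fin.succ_ne_zero i).symm),
      if_pos rfl, Units.val_neg, uu_val]
    noncomm_ring
  · ext
    rw [if_neg hik, sigmaU_val, uu_val, map_mul, sigma_gen, sigma_gen,
      if_neg (show (0 : Fin (m+1)) ≠ k.succ from (Fin.succ_ne_zero k).symm),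
      if_neg (fun h => hik (Fin.succ_injective _ h))]

lemma sigmaU_prod (k : Fin m) (v : Fin m → ZMod 2) (hv : v k = 1) (l : List (Fin m)) :
    sigmaU (m+1) k.succ ((l.map (fun i => if v i = 1 then uu i else 1)).prod)
      = (-1) ^ (l.count k) * (l.map (fun i => if v i = 1 then uu i else 1)).prod := by
  induction l with
  | nil => simp
  | cons i t ih =>
    rw [List.map_cons, List.prod_cons, map_mul, ih]
    rcases eq_or_ne i k with rfl | hik
    · rw [List.count_cons_self, if_pos hv, sigmaU_uu, if_pos rfl, ← neg_one_mul,
        mul_assoc, mul_neg_one_pow_mul, ← mul_assoc, ← pow_succ']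
    · rw [List.count_cons_of_ne hik,
        apply_ite (sigmaU (m+1) k.succ), map_one, sigmaU_uu, if_neg hik]
      exact mul_neg_one_pow_mul _ _ _

lemma psi_injective : Function.Injective (psi m) := by
  rw [injective_iff_map_eq_one (psi m)]
  intro g hg
  obtain ⟨a, v, rfl⟩ := normal_form g
  have hne : ((1 : (CliffordAlgebra (negQ (m+1)))ˣ)) ≠ -1 := by
    intro h
    apply one_ne_neg_one (m+1)
    have := congrArg Units.val h
    simpa using this
  have hW : psi m (eps m ^ a * nf v)
      = (-1) ^ a * (((List.finRange m).map (fun i => if v i = 1 then uu i else 1)).prod) := by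
    rw [map_mul, map_pow, psi_eps, nf, psi_pword]
  have hv0 : v = 0 := by
    funext k
    rcases zmod2_cases (v k) with h0 | h1
    · exact h0
    · exfalso
      have hgW : (-1) ^ a *
          (((List.finRange m).map (fun i => if v i = 1 then uu i else 1)).prod) = 1 :=
        hW.symm.trans hg
      have hs := congrArg (sigmaU (m+1) k.succ) hg
      rw [map_one, hW, map_mul, map_pow, sigmaU_neg_one, sigmaU_prod k v h1,
        List.count_eq_one_of_mem (List.nodup_finRange m) (List.mem_finRange k), pow_one,
        neg_one_mul, mul_neg, hgW] at hs
      exact hne hs.symm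
  rw [hv0, nf_zero, mul_one] at hg ⊢
  rw [map_pow, psi_eps] at hg
  rcases Nat.even_or_odd a with he | ho
  · obtain ⟨b, rfl⟩ := he
    rw [← two_mul, pow_mul, sq, heps2, one_pow]
  · exfalso
    rw [ho.neg_one_pow] at hg
    exact hne hg.symm

lemma range_le_En : (psi m).range ≤ En (m+1) := by
  rw [MonoidHom.range_eq_map, ← PresentedGroup.closure_range_of (GRels (m+1)),
    MonoidHom.map_closure]
  refine Subgroup.closure_le _ |>.mpr ?_
  rintro u ⟨g, ⟨y, rfl⟩, rfl⟩
  apply Subgroup.subset_closure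
  rcases y with _ | i
  · left
    rw [show psi m (PresentedGroup.of none) = -1 from psi_eps]
    simp
  · right
    refine ⟨0, Fin.succ i, (Fin.succ_ne_zero i).symm, ?_⟩
    rw [show psi m (PresentedGroup.of (some i)) = uu i from psi_x i, uu_val]
    exact rfl

lemma En_le_range : En (m+1) ≤ (psi m).range := by
  refine Subgroup.closure_le _ |>.mpr ?_
  rintro u (hu | ⟨i, j, hij, hu⟩)
  · refine ⟨eps m, ?_⟩
    rw [psi_eps]; ext; rw [hu]; simp
  · induction i using Fin.cases with
    | zero =>
      induction j using Fin.cases with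
      | zero => exact absurd rfl hij
      | succ l =>
        refine ⟨xg l, ?_⟩
        rw [psi_x]; ext; rw [uu_val, hu]
    | succ k =>
      induction j using Fin.cases with
      | zero =>
        refine ⟨eps m * xg k, ?_⟩
        rw [map_mul, psi_eps, psi_x]
        ext
        rw [Units.val_mul, Units.val_neg, Units.val_one, uu_val, hu,
          ee_anti (m+1) (Fin.succ_ne_zero k)]
        noncomm_ring
      | succ l =>
        have hkl : k ≠ l := fun h => hij (by rw [h])
        refine ⟨xg k * xg l, ?_⟩
        rw [map_mul, psi_x, psi_x]
        ext
        rw [Units.val_mul, uu_val, uu_val,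
          val_mul (m+1) (Fin.succ_ne_zero k).symm (Fin.succ_ne_zero l).symm, hu]

noncomputable def theEquiv (m : ℕ) : PresentedGroup (GRels (m+1)) ≃* En (m+1) := by
  refine MulEquiv.ofBijective
    ((psi m).codRestrict (En (m+1)) (fun g => range_le_En ⟨g, rfl⟩)) ⟨?_, ?_⟩
  · intro a b h
    exact psi_injective (congrArg Subtype.val h)
  · rintro ⟨y, hy⟩
    obtain ⟨g, hg⟩ := En_le_range hy
    exact ⟨g, Subtype.ext hg⟩

end St17

/-- For every `n ≥ 1`, the group `E(n)` is isomorphic to the presented group `G_{0,n−1}`. -/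
theorem statement_17 (n : ℕ) (hn : 1 ≤ n) :
    Nonempty (PresentedGroup (GRels n) ≃* En n) := by
  obtain ⟨m, rfl⟩ : ∃ m, n = m + 1 := ⟨n - 1, (Nat.succ_pred_eq_of_pos hn).symm⟩
  exact ⟨St17.theEquiv m⟩
end
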